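/- arXiv:1108.3628 — 3 statements merged into one kernel-verified Lean document; each statement's English description precedes it below -/
import Mathlib

section
/- For an irrational α with continued fraction [0; b₁, b₂, ...], limsup_{k→∞}(bₖ + v_{k-1} + tₖ) ≥ √5, where vₖ = [0; bₖ, ..., b₁] and tₖ = [0; b_{k+1}, ...], with equality if and only if bₖ = 1 for all sufficiently large k. -/
open Filter

noncomputable def cfFin : List ℕ → ℝ
  | [] => 0
  | a :: l => 1 / ((a : ℝ) + cfFin l)

noncomputable def cfInf (a : ℕ → ℕ) : ℝ :=
  limUnder Filter.atTop (fun n => cfFin (List.ofFn (fun i : Fin n => a i)))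

/-- forward tail: `cfT a k = [0; b_{k+1}, b_{k+2}, …]` where `bᵢ = a (i-1)`. -/
noncomputable def cfT (a : ℕ → ℕ) (k : ℕ) : ℝ := cfInf (fun n => a (n + k))

/-- backward tail: `cfV a k = [0; b_k, …, b_1]`. -/
noncomputable def cfV (a : ℕ → ℕ) (k : ℕ) : ℝ := cfFin ((List.range k).reverse.map a)

def cfQ (a : ℕ → ℕ) : ℕ → ℕ
  | 0 => 1
  | 1 => a 0
  | (k + 2) => a (k + 1) * cfQ a (k + 1) + cfQ a k

def cfP (a : ℕ → ℕ) : ℕ → ℕ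
  | 0 => 0
  | 1 => 1
  | (k + 2) => a (k + 1) * cfP a (k + 1) + cfP a k

noncomputable def cfG : List ℕ → ℝ → ℝ
  | [], x => x
  | a :: l, x => 1 / ((a : ℝ) + cfG l x)

lemma cfFin_eq_G (l : List ℕ) : cfFin l = cfG l 0 := by
  induction l with
  | nil => rfl
  | cons a l ih => simp only [cfFin, cfG, ih]

lemma cfG_mem (l : List ℕ) (hl : ∀ b ∈ l, 1 ≤ b) {x : ℝ} (hx : x ∈ Set.Icc (0:ℝ) 1) :
    cfG l x ∈ Set.Icc (0:ℝ) 1 := by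
  induction l with
  | nil => exact hx
  | cons a l ih =>
    have ha : (1:ℝ) ≤ (a:ℝ) := by exact_mod_cast hl a (.head _)
    obtain ⟨h0, h1⟩ := ih (fun b hb => hl b (.tail _ hb))
    simp only [cfG]
    constructor
    · have : (0:ℝ) < (a:ℝ) + cfG l x := by linarith
      positivity
    · rw [div_le_one (by linarith)]; linarith

lemma cfG_append (l₁ l₂ : List ℕ) (x : ℝ) : cfG (l₁ ++ l₂) x = cfG l₁ (cfG l₂ x) := by
  induction l₁ with
  | nil => rfl
  | cons a l ih => simp only [List.cons_append, cfG]; rw [← ih]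

lemma cfFin_mem (l : List ℕ) (hl : ∀ b ∈ l, 1 ≤ b) : cfFin l ∈ Set.Icc (0:ℝ) 1 := by
  rw [cfFin_eq_G]; exact cfG_mem l hl (by constructor <;> norm_num)

lemma abs_one_div_sub (c : ℝ) (hc : 1 ≤ c) {p q : ℝ} (hp : 0 ≤ p) (hq : 0 ≤ q) :
    |1/(c+p) - 1/(c+q)| = |p - q| / ((c+p)*(c+q)) := by
  have h1 : (0:ℝ) < c + p := by linarith
  have h2 : (0:ℝ) < c + q := by linarith
  rw [div_sub_div _ _ h1.ne' h2.ne', abs_div, abs_of_pos (a := (c+p)*(c+q)) (by positivity),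
    show 1 * (c + q) - (c + p) * 1 = -(p - q) by ring, abs_neg]

lemma cfG_contract : ∀ (l : List ℕ), (∀ b ∈ l, 1 ≤ b) →
    ∀ x ∈ Set.Icc (0:ℝ) 1, ∀ y ∈ Set.Icc (0:ℝ) 1,
    |cfG l x - cfG l y| ≤ (1/2 : ℝ) ^ l.length * 2 * |x - y|
  | [], _, x, _, y, _ => by
    simp only [cfG, List.length_nil, pow_zero, one_mul]
    nlinarith [abs_nonneg (x - y)]
  | [a], hl, x, hx, y, hy => by
    have ha : (1:ℝ) ≤ (a:ℝ) := by exact_mod_cast hl a (.head _)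
    simp only [cfG, List.length_singleton]
    rw [abs_one_div_sub _ ha hx.1 hy.1]
    have h1 : (1:ℝ) ≤ ((a:ℝ) + x) * ((a:ℝ) + y) := by nlinarith [hx.1, hy.1]
    have h2 : |x - y| / (((a:ℝ)+x)*((a:ℝ)+y)) ≤ |x - y| / 1 :=
      div_le_div_of_nonneg_left (abs_nonneg _) one_pos h1
    rw [div_one] at h2
    calc |x - y| / (((a:ℝ)+x)*((a:ℝ)+y)) ≤ |x - y| := h2
      _ ≤ (1/2:ℝ)^1 * 2 * |x - y| := by norm_num
  | a :: b :: l, hl, x, hx, y, hy => by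
    have ha : (1:ℝ) ≤ (a:ℝ) := by exact_mod_cast hl a (.head _)
    have hb : (1:ℝ) ≤ (b:ℝ) := by exact_mod_cast hl b (.tail _ (.head _))
    have hl' : ∀ c ∈ l, 1 ≤ c := fun c hc => hl c (.tail _ (.tail _ hc))
    set w := cfG l x with hw
    set w' := cfG l y with hw'
    obtain ⟨hw0, hw1⟩ := cfG_mem l hl' hx
    obtain ⟨hw0', hw1'⟩ := cfG_mem l hl' hy
    have ihl := cfG_contract l hl' x hx y hy
    have hbw : (0:ℝ) < (b:ℝ) + w := by linarith
    have hbw' : (0:ℝ) < (b:ℝ) + w' := by linarith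
    set u := 1/((b:ℝ) + w) with hu
    set v := 1/((b:ℝ) + w') with hv
    have hu0 : 0 ≤ u := by positivity
    have hv0 : 0 ≤ v := by positivity
    have e1 : cfG (a :: b :: l) x = 1/((a:ℝ) + u) := by simp only [cfG]; rfl
    have e2 : cfG (a :: b :: l) y = 1/((a:ℝ) + v) := by simp only [cfG]; rfl
    rw [e1, e2, abs_one_div_sub _ ha hu0 hv0]
    have e3 : |u - v| = |w - w'| / (((b:ℝ)+w)*((b:ℝ)+w')) := abs_one_div_sub _ hb hw0 hw0'
    have key : (4:ℝ) ≤ (((a:ℝ)+u)*((a:ℝ)+v)) * (((b:ℝ)+w)*((b:ℝ)+w')) := by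
      have k1 : ((a:ℝ)+u)*((b:ℝ)+w) = (a:ℝ)*((b:ℝ)+w) + 1 := by
        rw [hu, add_mul, div_mul_cancel₀ (1:ℝ) hbw.ne']
      have k2 : ((a:ℝ)+v)*((b:ℝ)+w') = (a:ℝ)*((b:ℝ)+w') + 1 := by
        rw [hv, add_mul, div_mul_cancel₀ (1:ℝ) hbw'.ne']
      have k3 : (2:ℝ) ≤ (a:ℝ)*((b:ℝ)+w) + 1 := by nlinarith
      have k4 : (2:ℝ) ≤ (a:ℝ)*((b:ℝ)+w') + 1 := by nlinarith
      calc (4:ℝ) ≤ ((a:ℝ)*((b:ℝ)+w) + 1) * ((a:ℝ)*((b:ℝ)+w') + 1) := by nlinarith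
        _ = (((a:ℝ)+u)*((a:ℝ)+v)) * (((b:ℝ)+w)*((b:ℝ)+w')) := by rw [← k1, ← k2]; ring
    have hau : (0:ℝ) < (a:ℝ) + u := by linarith
    have hav : (0:ℝ) < (a:ℝ) + v := by linarith
    calc |u - v| / (((a:ℝ)+u)*((a:ℝ)+v))
        = |w - w'| / ((((a:ℝ)+u)*((a:ℝ)+v)) * (((b:ℝ)+w)*((b:ℝ)+w'))) := by
          rw [e3, div_div, mul_comm (((a:ℝ)+u)*((a:ℝ)+v))]
      _ ≤ |w - w'| / 4 := by
          apply div_le_div_of_nonneg_left (abs_nonneg _) (by norm_num) key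
      _ ≤ ((1/2:ℝ)^l.length * 2 * |x - y|) / 4 := by
          apply div_le_div_of_nonneg_right ihl (by norm_num) |>.trans (le_refl _)
      _ = (1/2:ℝ)^(a :: b :: l).length * 2 * |x - y| := by
          simp only [List.length_cons]; ring

lemma ofFn_entries (b : ℕ → ℕ) (hb : ∀ n, 1 ≤ b n) (n : ℕ) :
    ∀ c ∈ List.ofFn (fun i : Fin n => b i), 1 ≤ c := by
  intro c hc
  rw [List.mem_ofFn] at hc
  obtain ⟨i, rfl⟩ := hc
  exact hb i

lemma seq_mem (b : ℕ → ℕ) (hb : ∀ n, 1 ≤ b n) (n : ℕ) :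
    cfFin (List.ofFn (fun i : Fin n => b i)) ∈ Set.Icc (0:ℝ) 1 :=
  cfFin_mem _ (ofFn_entries b hb n)

lemma seq_split (b : ℕ → ℕ) (n : ℕ) :
    cfFin (List.ofFn (fun i : Fin (n+1) => b i)) =
      cfG (List.ofFn (fun i : Fin n => b i)) (cfFin [b n]) := by
  rw [cfFin_eq_G, List.ofFn_succ', List.concat_eq_append, cfG_append, cfFin_eq_G]
  congr 1

lemma cfInf_tendsto (b : ℕ → ℕ) (hb : ∀ n, 1 ≤ b n) :
    Filter.Tendsto (fun n => cfFin (List.ofFn (fun i : Fin n => b i))) Filter.atTop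
      (nhds (cfInf b)) := by
  have hstep : ∀ n, dist (cfFin (List.ofFn (fun i : Fin n => b i)))
      (cfFin (List.ofFn (fun i : Fin (n+1) => b i))) ≤ 2 * (1/2 : ℝ) ^ n := by
    intro n
    rw [seq_split, Real.dist_eq, cfFin_eq_G]
    have hz : cfFin [b n] ∈ Set.Icc (0:ℝ) 1 :=
      cfFin_mem _ (by intro c hc; rw [List.mem_singleton] at hc; subst hc; exact hb n)
    have := cfG_contract (List.ofFn (fun i : Fin n => b i)) (ofFn_entries b hb n)
      0 (by norm_num) (cfFin [b n]) hz
    rw [List.length_ofFn] at this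
    have habs : |(0:ℝ) - cfFin [b n]| ≤ 1 := by
      rw [abs_sub_comm, sub_zero, abs_of_nonneg hz.1]; exact hz.2
    calc |cfG _ 0 - cfG _ (cfFin [b n])| ≤ (1/2:ℝ)^n * 2 * |0 - cfFin [b n]| := this
      _ ≤ (1/2:ℝ)^n * 2 * 1 := by
          apply mul_le_mul_of_nonneg_left habs (by positivity)
      _ = 2 * (1/2:ℝ)^n := by ring
  have hcau : CauchySeq (fun n => cfFin (List.ofFn (fun i : Fin n => b i))) :=
    cauchySeq_of_le_geometric (1/2) 2 (by norm_num) hstep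
  obtain ⟨L, hL⟩ := cauchySeq_tendsto_of_complete hcau
  have : cfInf b = L := hL.limUnder_eq
  rwa [this]

lemma cfInf_mem (b : ℕ → ℕ) (hb : ∀ n, 1 ≤ b n) : cfInf b ∈ Set.Icc (0:ℝ) 1 :=
  isClosed_Icc.mem_of_tendsto (cfInf_tendsto b hb)
    (Filter.Eventually.of_forall (seq_mem b hb))

lemma cfT_mem (a : ℕ → ℕ) (ha : ∀ n, 1 ≤ a n) (k : ℕ) : cfT a k ∈ Set.Icc (0:ℝ) 1 :=
  cfInf_mem _ (fun n => ha (n + k))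

lemma cfT_rec (a : ℕ → ℕ) (ha : ∀ n, 1 ≤ a n) (k : ℕ) :
    cfT a k = 1 / ((a k : ℝ) + cfT a (k+1)) := by
  have h1 : Filter.Tendsto (fun n => cfFin (List.ofFn (fun i : Fin (n+1) => a (i + k))))
      Filter.atTop (nhds (cfT a k)) :=
    (cfInf_tendsto (fun n => a (n + k)) (fun n => ha _)).comp (tendsto_add_atTop_nat 1)
  have hden : (0:ℝ) < (a k : ℝ) + cfT a (k+1) := by
    have := (cfT_mem a ha (k+1)).1
    have hak : (1:ℝ) ≤ (a k : ℝ) := by exact_mod_cast ha k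
    linarith
  have h2 : Filter.Tendsto
      (fun n => 1 / ((a k : ℝ) + cfFin (List.ofFn (fun i : Fin n => a (i + (k+1))))))
      Filter.atTop (nhds (1 / ((a k : ℝ) + cfT a (k+1)))) :=
    tendsto_const_nhds.div
      (tendsto_const_nhds.add (cfInf_tendsto (fun n => a (n + (k+1))) (fun n => ha _)))
      hden.ne'
  have heq : ∀ n, cfFin (List.ofFn (fun i : Fin (n+1) => a (i + k))) =
      1 / ((a k : ℝ) + cfFin (List.ofFn (fun i : Fin n => a (i + (k+1))))) := by
    intro n
    simp only [List.ofFn_succ, cfFin, Fin.val_succ, Fin.val_zero, zero_add]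
    have hidx : (fun i : Fin n => a (↑i + 1 + k)) = fun i : Fin n => a (↑i + (k+1)) := by
      funext i; congr 1; omega
    rw [hidx]
  rw [show (fun n => cfFin (List.ofFn (fun i : Fin (n+1) => a (i + k)))) =
      (fun n => 1 / ((a k : ℝ) + cfFin (List.ofFn (fun i : Fin n => a (i + (k+1)))))) from
      funext heq] at h1
  exact tendsto_nhds_unique h1 h2

lemma cfT_pos (a : ℕ → ℕ) (ha : ∀ n, 1 ≤ a n) (k : ℕ) : 0 < cfT a k := by
  rw [cfT_rec a ha k]
  have := (cfT_mem a ha (k+1)).1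
  have hak : (1:ℝ) ≤ (a k : ℝ) := by exact_mod_cast ha k
  positivity

lemma cfT_lt_one (a : ℕ → ℕ) (ha : ∀ n, 1 ≤ a n) (k : ℕ) : cfT a k < 1 := by
  rw [cfT_rec a ha k]
  have h1 := cfT_pos a ha (k+1)
  have hak : (1:ℝ) ≤ (a k : ℝ) := by exact_mod_cast ha k
  rw [div_lt_one (by linarith)]
  linarith

lemma cfV_zero (a : ℕ → ℕ) : cfV a 0 = 0 := by simp [cfV, cfFin]

lemma cfV_succ (a : ℕ → ℕ) (k : ℕ) : cfV a (k+1) = 1 / ((a k : ℝ) + cfV a k) := by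
  simp only [cfV, List.range_succ, List.reverse_append, List.reverse_singleton,
    List.singleton_append, List.map_cons, cfFin]

lemma cfV_mem (a : ℕ → ℕ) (ha : ∀ n, 1 ≤ a n) (k : ℕ) : cfV a k ∈ Set.Icc (0:ℝ) 1 := by
  induction k with
  | zero => rw [cfV_zero]; constructor <;> norm_num
  | succ k ih =>
    rw [cfV_succ]
    have hak : (1:ℝ) ≤ (a k : ℝ) := by exact_mod_cast ha k
    constructor
    · have : (0:ℝ) < (a k : ℝ) + cfV a k := by linarith [ih.1]
      positivity
    · rw [div_le_one (by linarith [ih.1])]; linarith [ih.1]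

lemma cfV_pos (a : ℕ → ℕ) (ha : ∀ n, 1 ≤ a n) (k : ℕ) : 0 < cfV a (k+1) := by
  rw [cfV_succ]
  have hak : (1:ℝ) ≤ (a k : ℝ) := by exact_mod_cast ha k
  have := (cfV_mem a ha k).1
  positivity

lemma cfFin_rat (l : List ℕ) : ∃ q : ℚ, cfFin l = (q : ℝ) := by
  induction l with
  | nil => exact ⟨0, by simp [cfFin]⟩
  | cons a l ih =>
    obtain ⟨q, hq⟩ := ih
    exact ⟨1 / ((a:ℚ) + q), by rw [cfFin, hq]; push_cast; ring⟩

lemma cfV_rat (a : ℕ → ℕ) (k : ℕ) : ∃ q : ℚ, cfV a k = (q : ℝ) := cfFin_rat _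

section core
variable (a : ℕ → ℕ)

local notation "S" => Real.sqrt 5

lemma hs2 : S ^ 2 = 5 := Real.sq_sqrt (by norm_num)

lemma hs_gt : 2 < S := by nlinarith [hs2, Real.sqrt_nonneg 5]

lemma hs_lt : S < 3 := by nlinarith [hs2, Real.sqrt_nonneg 5]

lemma key_ineq {lam mu : ℝ} (hlam : 0 < lam) (hlam1 : lam ≤ 1) (hmu : 0 < mu)
    (hmu1 : mu ≤ 1) (h1 : 1/lam + mu ≤ S) (h2 : 1/mu + lam ≤ S) : (S - 1)/2 ≤ lam := by
  have hs2 := hs2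
  have hs_gt := hs_gt
  have e1 : 1 ≤ (S - mu) * lam := by
    rw [← div_le_iff₀ hlam]
    linarith [h1]
  have e2 : 1 ≤ (S - lam) * mu := by
    rw [← div_le_iff₀ hmu]
    linarith [h2]
  have hsl : (0:ℝ) < S - lam := by linarith
  have step1 : lam ≤ lam * ((S - lam) * mu) := by nlinarith
  have hlm : lam * mu ≤ S * lam - 1 := by nlinarith
  have step2 : lam * ((S - lam) * mu) ≤ (S * lam - 1) * (S - lam) := by
    nlinarith [mul_le_mul_of_nonneg_right hlm hsl.le]
  have step3 : S * lam^2 + S ≤ 5 * lam := by nlinarith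
  have step4 : lam^2 + 1 ≤ S * lam := by nlinarith [mul_le_mul_of_nonneg_left step3 (by linarith : (0:ℝ) ≤ S)]
  by_contra hcon
  push_neg at hcon
  have hpos : 0 < S + 1 - 2 * lam := by linarith
  nlinarith [mul_pos (show (0:ℝ) < S - 1 - 2*lam by linarith) hpos]

variable (ha : ∀ n, 1 ≤ a n)
include ha

lemma f_eq1 (k : ℕ) :
    (a k : ℝ) + cfV a k + cfT a (k+1) = 1 / cfV a (k+1) + cfT a (k+1) := by
  rw [cfV_succ, one_div_one_div]

lemma f_eq2 (k : ℕ) :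
    (a k : ℝ) + cfV a k + cfT a (k+1) = 1 / cfT a k + cfV a k := by
  rw [cfT_rec a ha k, one_div_one_div]; ring

lemma vg (k : ℕ) (h1 : (a k : ℝ) + cfV a k + cfT a (k+1) ≤ S)
    (h2 : (a (k+1) : ℝ) + cfV a (k+1) + cfT a (k+2) ≤ S) :
    (S - 1)/2 < cfV a (k+1) := by
  have hlam := cfV_pos a ha k
  have hlam1 := (cfV_mem a ha (k+1)).2
  have hmu := cfT_pos a ha (k+1)
  have hmu1 := (cfT_mem a ha (k+1)).2
  rw [f_eq1 a ha] at h1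
  rw [f_eq2 a ha] at h2
  have hle : (S - 1)/2 ≤ cfV a (k+1) := key_ineq hlam hlam1 hmu hmu1 h1 h2
  rcases lt_or_eq_of_le hle with h | h
  · exact h
  · exfalso
    obtain ⟨q, hq⟩ := cfV_rat a (k+1)
    have hirr : Irrational S := by
      have := (by norm_num : Nat.Prime 5).irrational_sqrt
      simpa using this
    exact hirr ⟨2*q + 1, by push_cast; rw [hq] at h; linarith⟩

lemma no_three (k : ℕ) :
    ¬((a k : ℝ) + cfV a k + cfT a (k+1) ≤ S ∧
      (a (k+1) : ℝ) + cfV a (k+1) + cfT a (k+2) ≤ S ∧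
      (a (k+2) : ℝ) + cfV a (k+2) + cfT a (k+3) ≤ S) := by
  rintro ⟨h1, h2, h3⟩
  have hv1 := vg a ha k h1 h2
  have hv2 := vg a ha (k+1) h2 h3
  have hs2 := hs2
  have hs_gt := hs_gt
  have hak : (1:ℝ) ≤ (a (k+1) : ℝ) := by exact_mod_cast ha (k+1)
  have hd : (S + 1)/2 < (a (k+1) : ℝ) + cfV a (k+1) := by linarith
  have hsp : (0:ℝ) < (S + 1)/2 := by linarith
  have hlt : cfV a (k+2) < 1 / ((S + 1)/2) := by
    rw [cfV_succ]
    exact one_div_lt_one_div_of_lt hsp hd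
  have heq : 1 / ((S + 1)/2) = (S - 1)/2 := by
    rw [div_eq_div_iff (by linarith) (by norm_num)]
    nlinarith
  rw [heq] at hlt
  linarith

lemma freq_gt : ∀ n : ℕ, ∃ k ≥ n, S < (a k : ℝ) + cfV a k + cfT a (k+1) := by
  intro n
  by_contra hcon
  push_neg at hcon
  exact no_three a ha n ⟨hcon n le_rfl, hcon (n+1) (by omega), hcon (n+2) (by omega)⟩

end core

section final
variable (a : ℕ → ℕ) (ha : ∀ n, 1 ≤ a n)

local notation "S" => Real.sqrt 5

include ha in
lemma cfT_eventually_one {N : ℕ} (hN : ∀ k ≥ N, a k = 1) (k : ℕ) (hk : N ≤ k) :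
    cfT a k = (S - 1)/2 := by
  have hconst : ∀ j ≥ N, cfT a j = cfT a N := by
    intro j hj
    unfold cfT
    congr 1
    funext n
    rw [hN (n + j) (by omega), hN (n + N) (by omega)]
  set T := cfT a N with hT
  have hrecN : T = 1 / (1 + T) := by
    have := cfT_rec a ha N
    rw [hN N le_rfl] at this
    rw [hconst (N+1) (by omega)] at this
    simpa using this
  have hT0 : 0 ≤ T := (cfT_mem a ha N).1
  have hTq : T^2 + T - 1 = 0 := by
    have hpos : (0:ℝ) < 1 + T := by linarith
    field_simp at hrecN
    nlinarith [hrecN]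
  have hs2 := hs2
  have hs_gt := hs_gt
  have h0 : (T - (S-1)/2) * (T + (S+1)/2) = 0 := by linear_combination hTq - (1/4) * hs2
  have hEq : T = (S-1)/2 := by
    rcases mul_eq_zero.mp h0 with h | h
    · linarith
    · exfalso; nlinarith
  rw [hconst k hk]; exact hEq

include ha in
lemma cfV_tendsto {N : ℕ} (hN : ∀ k ≥ N, a k = 1) :
    Filter.Tendsto (fun k => cfV a k) Filter.atTop (nhds ((S - 1)/2)) := by
  have hs2 := hs2
  have hs_gt := hs_gt
  have hs_lt := hs_lt
  set g := (S - 1)/2 with hg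
  have hg0 : 0 < g := by rw [hg]; linarith
  have hg1 : g < 1 := by rw [hg]; linarith
  have hgeq : g = 1 / (1 + g) := by
    rw [hg, div_eq_div_iff (by norm_num) (by linarith)]
    nlinarith
  have claim : ∀ m, |cfV a (m + N) - g| ≤ g ^ m := by
    intro m
    induction m with
    | zero =>
      simp only [pow_zero, zero_add]
      have h1 := (cfV_mem a ha N).1
      have h2 := (cfV_mem a ha N).2
      rcases abs_cases (cfV a N - g) with ⟨h, _⟩ | ⟨h, _⟩ <;> rw [h] <;> linarith
    | succ m ih =>
      have hv0 := (cfV_mem a ha (m + N)).1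
      have hstep : cfV a (m + N + 1) = 1 / (1 + cfV a (m + N)) := by
        rw [cfV_succ, hN (m + N) (by omega)]
        norm_num
      rw [show m + 1 + N = m + N + 1 by omega, hstep]
      nth_rewrite 1 [hgeq]
      rw [abs_one_div_sub 1 le_rfl hv0 (by linarith : (0:ℝ) ≤ g)]
      have hden : (1:ℝ)/(1+g) ≤ g := by rw [← hgeq]
      have hb1 : (1:ℝ) ≤ (1 + cfV a (m+N)) := by linarith
      have hb2 : (0:ℝ) < 1 + g := by linarith
      calc |cfV a (m+N) - g| / ((1 + cfV a (m+N)) * (1 + g))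
          ≤ |cfV a (m+N) - g| / (1 * (1 + g)) := by
            apply div_le_div_of_nonneg_left (abs_nonneg _) (by linarith)
            nlinarith [abs_nonneg (cfV a (m+N) - g)]
        _ = |cfV a (m+N) - g| * (1/(1+g)) := by ring
        _ ≤ g^m * g := by
            apply mul_le_mul ih hden (by positivity) (by positivity)
        _ = g^(m+1) := by ring
  have hzero : Filter.Tendsto (fun m => cfV a (m + N) - g) Filter.atTop (nhds 0) := by
    refine squeeze_zero_norm (fun m => claim m) ?_
    exact tendsto_pow_atTop_nhds_zero_of_lt_one (by linarith) hg1
  have hshift : Filter.Tendsto (fun m => cfV a (m + N)) Filter.atTop (nhds g) := by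
    have := hzero.add (tendsto_const_nhds (x := g))
    simpa using this
  exact (tendsto_add_atTop_iff_nat N).mp hshift

include ha in
lemma tendsto_of_eventually_one (hev : ∀ᶠ k in Filter.atTop, a k = 1) :
    Filter.Tendsto (fun k => (a k : ℝ) + cfV a k + cfT a (k+1)) Filter.atTop (nhds S) := by
  obtain ⟨N, hN⟩ := Filter.eventually_atTop.mp hev
  set g := (S - 1)/2 with hg
  have hv := cfV_tendsto a ha hN
  have hlim : Filter.Tendsto (fun k => 1 + cfV a k + g) Filter.atTop (nhds S) := by
    have : Filter.Tendsto (fun k => 1 + cfV a k + g) Filter.atTop (nhds (1 + g + g)) :=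
      (tendsto_const_nhds.add hv).add tendsto_const_nhds
    have hSg : 1 + g + g = S := by rw [hg]; ring
    rwa [hSg] at this
  apply hlim.congr'
  rw [Filter.eventuallyEq_iff_exists_mem]
  refine ⟨{k | N ≤ k}, Filter.mem_atTop N, fun k hk => ?_⟩
  simp only [Set.mem_setOf_eq] at hk
  show 1 + cfV a k + g = (a k : ℝ) + cfV a k + cfT a (k+1)
  rw [hN k hk, cfT_eventually_one a ha hN (k+1) (by omega), ← hg]
  norm_num

include ha in
theorem stmt8' :
    ((Real.sqrt 5 : ℝ) : EReal) ≤
      Filter.limsup (fun k => (((a k : ℝ) + cfV a k + cfT a (k + 1) : ℝ) : EReal))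
        Filter.atTop ∧
    (Filter.limsup (fun k => (((a k : ℝ) + cfV a k + cfT a (k + 1) : ℝ) : EReal))
          Filter.atTop = ((Real.sqrt 5 : ℝ) : EReal) ↔
        ∀ᶠ k in Filter.atTop, a k = 1) := by
  have hge : ((S : ℝ) : EReal) ≤
      Filter.limsup (fun k => (((a k : ℝ) + cfV a k + cfT a (k + 1) : ℝ) : EReal))
        Filter.atTop := by
    apply Filter.le_limsup_of_frequently_le (hu_le := Filter.isBoundedUnder_of ⟨⊤, fun x => le_top⟩)
    rw [Filter.frequently_atTop]
    intro n
    obtain ⟨k, hk, hlt⟩ := freq_gt a ha n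
    exact ⟨k, hk, by exact_mod_cast hlt.le⟩
  refine ⟨hge, ?_, ?_⟩
  · -- limsup = √5 → eventually a k = 1
    intro hlim
    by_contra hne
    have hfreq : ∃ᶠ k in Filter.atTop, a k ≠ 1 := Filter.not_eventually.mp hne
    have h24 : Filter.limsup (fun k => (((a k : ℝ) + cfV a k + cfT a (k + 1) : ℝ) : EReal))
        Filter.atTop < ((12/5 : ℝ) : EReal) := by
      rw [hlim]
      have : S < 12/5 := by nlinarith [hs2, Real.sqrt_nonneg 5]
      exact_mod_cast this
    have hev := Filter.eventually_lt_of_limsup_lt h24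
    obtain ⟨K, hK⟩ := Filter.eventually_atTop.mp hev
    have hKr : ∀ k ≥ K, (a k : ℝ) + cfV a k + cfT a (k+1) < 12/5 := by
      intro k hk
      have := hK k hk
      exact_mod_cast this
    have hA : ∀ k ≥ K, a k ≤ 2 := by
      intro k hk
      by_contra hcon
      have h3 : (3:ℝ) ≤ (a k : ℝ) := by exact_mod_cast (by omega : 3 ≤ a k)
      have := hKr k hk
      have hv := (cfV_mem a ha k).1
      have ht := (cfT_pos a ha (k+1)).le
      linarith
    obtain ⟨k, hk, hk1⟩ := Filter.frequently_atTop.mp hfreq (K + 1)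
    obtain ⟨k', rfl⟩ : ∃ k', k = k' + 1 := ⟨k - 1, by omega⟩
    have hak : a (k' + 1) = 2 := by
      have := hA (k'+1) (by omega)
      have := ha (k'+1)
      omega
    -- v_{k'+1} ≥ 1/3
    have hv13 : (1:ℝ)/3 ≤ cfV a (k'+1) := by
      rw [cfV_succ]
      have h2 : (a k' : ℝ) ≤ 2 := by exact_mod_cast hA k' (by omega)
      have h1 : (1:ℝ) ≤ (a k' : ℝ) := by exact_mod_cast ha k'
      have hv1 := (cfV_mem a ha k').2
      have hv0 := (cfV_mem a ha k').1
      apply one_div_le_one_div_of_le (by linarith)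
      linarith
    have ht13 : (1:ℝ)/3 ≤ cfT a (k'+2) := by
      rw [cfT_rec a ha (k'+2)]
      have h2 : (a (k'+2) : ℝ) ≤ 2 := by exact_mod_cast hA (k'+2) (by omega)
      have h1 : (1:ℝ) ≤ (a (k'+2) : ℝ) := by exact_mod_cast ha (k'+2)
      have ht1 := (cfT_mem a ha (k'+3)).2
      have ht0 := (cfT_mem a ha (k'+3)).1
      apply one_div_le_one_div_of_le (by linarith)
      linarith
    have hbig : (8:ℝ)/3 ≤ (a (k'+1) : ℝ) + cfV a (k'+1) + cfT a (k'+2) := by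
      rw [hak]
      norm_num
      linarith
    have := hKr (k'+1) (by omega)
    linarith
  · -- eventually a k = 1 → limsup = √5
    intro hev
    have h := tendsto_of_eventually_one a ha hev
    have hE : Filter.Tendsto (fun k => (((a k : ℝ) + cfV a k + cfT a (k + 1) : ℝ) : EReal))
        Filter.atTop (nhds ((S : ℝ) : EReal)) := EReal.tendsto_coe.mpr h
    exact hE.limsup_eq

end final

/-- Hurwitz: limsup (bₖ + v_{k-1} + tₖ) ≥ √5, with equality iff bₖ = 1
eventually. -/
theorem stmt8 (a : ℕ → ℕ) (ha : ∀ n, 1 ≤ a n) :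
    ((Real.sqrt 5 : ℝ) : EReal) ≤
      Filter.limsup (fun k => (((a k : ℝ) + cfV a k + cfT a (k + 1) : ℝ) : EReal))
        Filter.atTop ∧
    (Filter.limsup (fun k => (((a k : ℝ) + cfV a k + cfT a (k + 1) : ℝ) : EReal))
          Filter.atTop = ((Real.sqrt 5 : ℝ) : EReal) ↔
        ∀ᶠ k in Filter.atTop, a k = 1) := by
  exact stmt8' a ha
end

section
/- If two uniquely ergodic minimal symbolic dynamical systems are topologically conjugate, then they have the same values of ℬ = limsup_{n→∞} 1/(n·eₙ) and ℬ' = liminf_{n→∞} 1/(n·eₙ). -/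
open Filter MeasureTheory

/-- The cylinder of a word `w` of length `n`. -/
def cylSet {A : Type*} (n : ℕ) (w : Fin n → A) : Set (ℕ → A) :=
  {x | ∀ i : Fin n, x (i : ℕ) = w i}

/-- `eₙ`: the smallest positive measure of a cylinder of length `n`. -/
noncomputable def minFreq {A : Type*} [MeasurableSpace A]
    (μ : Measure (ℕ → A)) (n : ℕ) : ℝ :=
  (⨅ w : {w : Fin n → A // 0 < μ (cylSet n w)}, μ (cylSet n w.1)).toReal

/-- complexity: the number of words of length `n` whose cylinder has positive measure. -/
noncomputable def cplx {A : Type*} [MeasurableSpace A]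
    (μ : Measure (ℕ → A)) (n : ℕ) : ℕ :=
  Set.ncard {w : Fin n → A | 0 < μ (cylSet n w)}

/-- the shift map. -/
def shiftMap {A : Type*} : (ℕ → A) → (ℕ → A) := fun x n => x (n + 1)

lemma ereal_limsup_nonneg (v : ℕ → ℝ) (hv : ∀ n, 0 ≤ v n) :
    (0:EReal) ≤ limsup (fun n => ((v n : ℝ) : EReal)) atTop := by
  have h1 : limsup (fun _ : ℕ => (0 : EReal)) atTop ≤ limsup (fun n => ((v n : ℝ) : EReal)) atTop :=
    limsup_le_limsup (Eventually.of_forall fun n => by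
        show (0:EReal) ≤ ((v n : ℝ) : EReal); exact_mod_cast hv n)
      (by isBoundedDefault) (by isBoundedDefault)
  simpa using h1

lemma ereal_liminf_nonneg (v : ℕ → ℝ) (hv : ∀ n, 0 ≤ v n) :
    (0:EReal) ≤ liminf (fun n => ((v n : ℝ) : EReal)) atTop := by
  have h1 : liminf (fun _ : ℕ => (0 : EReal)) atTop ≤ liminf (fun n => ((v n : ℝ) : EReal)) atTop :=
    liminf_le_liminf (Eventually.of_forall fun n => by
        show (0:EReal) ≤ ((v n : ℝ) : EReal); exact_mod_cast hv n)
      (by isBoundedDefault) (by isBoundedDefault)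
  simpa using h1

lemma eps_arith (L c : ℝ) (hL : 0 ≤ L) (hc : L < c) :
    ∃ ε : ℝ, 0 < ε ∧ (1 + ε) * (L + ε) < c := by
  have hden : (0:ℝ) < 2*(L+2) := by nlinarith
  have hpos : 0 < (c - L)/(2*(L+2)) := div_pos (by linarith) hden
  refine ⟨min 1 ((c - L)/(2*(L+2))), lt_min one_pos hpos, ?_⟩
  have h1 : min 1 ((c - L)/(2*(L+2))) ≤ 1 := min_le_left _ _
  have h2 : min 1 ((c - L)/(2*(L+2))) ≤ (c - L)/(2*(L+2)) := min_le_right _ _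
  have h3 : 0 < min 1 ((c - L)/(2*(L+2))) := lt_min one_pos hpos
  set e := min 1 ((c - L)/(2*(L+2))) with he
  have h4 : e * (2*(L+2)) ≤ c - L := by
    calc e * (2*(L+2)) ≤ ((c - L)/(2*(L+2))) * (2*(L+2)) := by nlinarith
    _ = c - L := div_mul_cancel₀ _ hden.ne'
  nlinarith

lemma limsup_le_aux (u v : ℕ → ℝ) (hu : ∀ n, 0 ≤ u n) (hv : ∀ n, 0 ≤ v n)
    (h : ∀ ε : ℝ, 0 < ε → ∀ᶠ n in atTop, u n ≤ (1 + ε) * v n) :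
    limsup (fun n => ((u n : ℝ) : EReal)) atTop ≤ limsup (fun n => ((v n : ℝ) : EReal)) atTop := by
  rcases eq_or_ne (limsup (fun n => ((v n : ℝ) : EReal)) atTop) ⊤ with hT | hT
  · rw [hT]; exact le_top
  have hV0 := ereal_limsup_nonneg v hv
  obtain ⟨L, hL⟩ : ∃ L : ℝ, limsup (fun n => ((v n : ℝ) : EReal)) atTop = (L : EReal) := by
    lift (limsup (fun n => ((v n : ℝ) : EReal)) atTop) to ℝ using
      ⟨hT, ((lt_of_lt_of_le (by norm_num : (⊥:EReal) < 0) hV0)).ne'⟩ with L hL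
    exact ⟨L, rfl⟩
  have hL0 : 0 ≤ L := by rw [hL] at hV0; exact_mod_cast hV0
  by_contra hcon
  push_neg at hcon
  obtain ⟨c, hc1, hc2⟩ := EReal.exists_between_coe_real hcon
  rw [hL] at hc1
  have hLc : L < c := by exact_mod_cast hc1
  obtain ⟨ε, hε, hεc⟩ := eps_arith L c hL0 hLc
  have hev : ∀ᶠ n in atTop, ((v n : ℝ) : EReal) < ((L + ε : ℝ) : EReal) := by
    apply eventually_lt_of_limsup_lt
    · rw [hL]; exact_mod_cast (by linarith : L < L + ε)
    · isBoundedDefault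
  have hev2 := h ε hε
  have : ∀ᶠ n in atTop, ((u n : ℝ) : EReal) ≤ (c : EReal) := by
    filter_upwards [hev, hev2] with n h1 h2
    have h1' : v n < L + ε := by exact_mod_cast h1
    have : u n ≤ c := by nlinarith
    exact_mod_cast this
  have : limsup (fun n => ((u n : ℝ) : EReal)) atTop ≤ (c : EReal) :=
    limsup_le_of_le (by isBoundedDefault) this
  exact absurd (lt_of_lt_of_le hc2 this) (lt_irrefl _)

lemma liminf_le_aux (u v : ℕ → ℝ) (hu : ∀ n, 0 ≤ u n) (hv : ∀ n, 0 ≤ v n)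
    (h : ∀ ε : ℝ, 0 < ε → ∀ᶠ n in atTop, u n ≤ (1 + ε) * v n) :
    liminf (fun n => ((u n : ℝ) : EReal)) atTop ≤ liminf (fun n => ((v n : ℝ) : EReal)) atTop := by
  rcases eq_or_ne (liminf (fun n => ((v n : ℝ) : EReal)) atTop) ⊤ with hT | hT
  · rw [hT]; exact le_top
  have hV0 := ereal_liminf_nonneg v hv
  obtain ⟨L, hL⟩ : ∃ L : ℝ, liminf (fun n => ((v n : ℝ) : EReal)) atTop = (L : EReal) := by
    lift (liminf (fun n => ((v n : ℝ) : EReal)) atTop) to ℝ using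
      ⟨hT, ((lt_of_lt_of_le (by norm_num : (⊥:EReal) < 0) hV0)).ne'⟩ with L hL
    exact ⟨L, rfl⟩
  have hL0 : 0 ≤ L := by rw [hL] at hV0; exact_mod_cast hV0
  by_contra hcon
  push_neg at hcon
  obtain ⟨c, hc1, hc2⟩ := EReal.exists_between_coe_real hcon
  rw [hL] at hc1
  have hLc : L < c := by exact_mod_cast hc1
  obtain ⟨ε, hε, hεc⟩ := eps_arith L c hL0 hLc
  have hfr : ∃ᶠ n in atTop, ((v n : ℝ) : EReal) < ((L + ε : ℝ) : EReal) := by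
    apply frequently_lt_of_liminf_lt
    · isBoundedDefault
    · rw [hL]; exact_mod_cast (by linarith : L < L + ε)
  have hev2 := h ε hε
  have hfr2 : ∃ᶠ n in atTop, ((u n : ℝ) : EReal) ≤ (c : EReal) := by
    apply (hfr.and_eventually hev2).mono
    rintro n ⟨h1, h2⟩
    have h1' : v n < L + ε := by exact_mod_cast h1
    have : u n ≤ c := by nlinarith
    exact_mod_cast this
  have : liminf (fun n => ((u n : ℝ) : EReal)) atTop ≤ (c : EReal) :=
    liminf_le_of_frequently_le hfr2 (by isBoundedDefault)
  exact absurd (lt_of_lt_of_le hc2 this) (lt_irrefl _)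

lemma event_ineq (a b : ℕ → ℝ) (ha : ∀ n, 0 < a n) (hb : ∀ n, 0 < b n) (s : ℕ)
    (hc : ∀ n, b (n + s) ≤ a n) (ε : ℝ) (hε : 0 < ε) :
    ∀ᶠ n : ℕ in atTop, 1 / ((n : ℝ) * a n) ≤ (1 + ε) * (1 / (((n + s : ℕ) : ℝ) * b (n + s))) := by
  filter_upwards [eventually_ge_atTop (max 1 ⌈(s : ℝ) / ε⌉₊)] with n hn
  have hn1 : 1 ≤ n := le_of_max_le_left hn
  have hnpos : (0 : ℝ) < n := by exact_mod_cast hn1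
  have hn2 : ((s : ℝ) / ε) ≤ n := Nat.ceil_le.mp (le_of_max_le_right hn)
  have hsn : (s : ℝ) ≤ ε * n := by
    rw [div_le_iff₀ hε] at hn2; linarith
  have hb' := hb (n + s)
  have ha' := ha n
  have h1 : 1 / ((n : ℝ) * a n) ≤ 1 / ((n : ℝ) * b (n + s)) := by
    apply one_div_le_one_div_of_le
    · positivity
    · exact mul_le_mul_of_nonneg_left (hc n) (le_of_lt hnpos)
  refine h1.trans ?_
  have heq : (1 + ε) * (1 / (((n + s : ℕ) : ℝ) * b (n + s)))
      = (1 + ε) / (((n : ℝ) + s) * b (n + s)) := by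
    push_cast; ring
  rw [heq, div_le_div_iff₀ (by positivity) (by positivity)]
  nlinarith [mul_nonneg (sub_nonneg.mpr hsn) hb'.le, mul_pos hnpos hb']


lemma cyl_nhd {A : Type*} [TopologicalSpace A] [DiscreteTopology A]
    (y : ℕ → A) (U : Set (ℕ → A)) (hU : U ∈ nhds y) :
    ∃ m : ℕ, {z : ℕ → A | ∀ i < m, z i = y i} ⊆ U := by
  rw [nhds_pi, Filter.mem_pi] at hU
  obtain ⟨I, hIfin, t, ht, hsub⟩ := hU
  obtain ⟨m, hm⟩ := hIfin.bddAbove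
  refine ⟨m + 1, fun z hz => hsub fun i hi => ?_⟩
  have : i ≤ m := hm hi
  rw [hz i (by omega)]
  exact mem_of_mem_nhds (ht i)

lemma cyl_open {A : Type*} [TopologicalSpace A] [DiscreteTopology A]
    (m : ℕ) (y : ℕ → A) : IsOpen {z : ℕ → A | ∀ i < m, z i = y i} := by
  have : {z : ℕ → A | ∀ i < m, z i = y i} = ⋂ i ∈ Finset.range m, (fun z : ℕ → A => z i) ⁻¹' {y i} := by
    ext z; simp [Set.mem_iInter]
  rw [this]
  exact isOpen_biInter_finset fun i _ => (continuous_apply i).isOpen_preimage _ (isOpen_discrete _)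

lemma radius_exists {A B : Type*} [Fintype A]
    [TopologicalSpace A] [DiscreteTopology A] [TopologicalSpace B] [DiscreteTopology B]
    (X : Set (ℕ → A)) (hXcl : IsClosed X)
    (g : X → B) (hg : Continuous g) :
    ∃ r : ℕ, ∀ x x' : X, (∀ i < r, (x : ℕ → A) i = (x' : ℕ → A) i) → g x = g x' := by
  -- for each x, a local radius
  have hloc : ∀ x : X, ∃ m : ℕ, ∀ x' : X, (∀ i < m, (x' : ℕ → A) i = (x : ℕ → A) i) → g x' = g x := by
    intro x
    have hopen : IsOpen (g ⁻¹' {g x}) := (isOpen_discrete _).preimage hg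
    obtain ⟨U, hUopen, hUeq⟩ := isOpen_induced_iff.mp hopen
    have hUnhd : U ∈ nhds (x : ℕ → A) := hUopen.mem_nhds (by
      have : x ∈ g ⁻¹' {g x} := rfl
      rw [← hUeq] at this; exact this)
    obtain ⟨m, hm⟩ := cyl_nhd (x : ℕ → A) U hUnhd
    refine ⟨m, fun x' hx' => ?_⟩
    have : (x' : ℕ → A) ∈ U := hm hx'
    have : x' ∈ ((↑) : X → ℕ → A) ⁻¹' U := this
    rw [hUeq] at this
    exact this
  choose m hm using hloc
  have hcomp : IsCompact X := hXcl.isCompact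
  have hcover : X ⊆ ⋃ x : X, {z : ℕ → A | ∀ i < m x, z i = (x : ℕ → A) i} := by
    intro z hz
    exact Set.mem_iUnion.mpr ⟨⟨z, hz⟩, fun i _ => rfl⟩
  obtain ⟨t, ht⟩ := hcomp.elim_finite_subcover _ (fun x : X => cyl_open (m x) _) hcover
  refine ⟨(t.sup m), fun x x' hagree => ?_⟩
  have hmem := ht x.2
  rw [Set.mem_iUnion₂] at hmem
  obtain ⟨x₀, hx₀t, hx₀⟩ := hmem
  have hmle : m x₀ ≤ t.sup m := Finset.le_sup hx₀t
  have h1 : g x = g x₀ := hm x₀ x fun i hi => hx₀ i hi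
  have h2 : g x' = g x₀ := hm x₀ x' fun i hi => by
    rw [← hagree i (lt_of_lt_of_le hi hmle)]; exact hx₀ i hi
  rw [h1, h2]



lemma cyl_meas {A : Type*} [MeasurableSpace A] [MeasurableSingletonClass A]
    (n : ℕ) (w : Fin n → A) : MeasurableSet (cylSet n w) := by
  have : cylSet n w = ⋂ i : Fin n, (fun x : ℕ → A => x (i : ℕ)) ⁻¹' {w i} := by
    ext x; simp [cylSet]
  rw [this]
  exact MeasurableSet.iInter fun i => (measurable_pi_apply _) (measurableSet_singleton _)

lemma shift_meas {A : Type*} [MeasurableSpace A] : Measurable (shiftMap (A := A)) := by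
  rw [measurable_pi_iff]; intro n; exact measurable_pi_apply _

lemma shift_iter_apply {A : Type*} (j : ℕ) (z : ℕ → A) (i : ℕ) :
    (shiftMap^[j] z) i = z (i + j) := by
  induction j generalizing z with
  | zero => rfl
  | succ j ih =>
    rw [Function.iterate_succ_apply, ih]
    show z (i + j + 1) = z (i + (j + 1))
    ring_nf

lemma exists_pos_cyl {A : Type*} [Fintype A] [MeasurableSpace A] [MeasurableSingletonClass A]
    (μ : Measure (ℕ → A)) [IsProbabilityMeasure μ] (n : ℕ) :
    ∃ w : Fin n → A, 0 < μ (cylSet n w) := by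
  by_contra hcon
  push_neg at hcon
  have hz : ∀ w : Fin n → A, μ (cylSet n w) = 0 := fun w => le_antisymm (hcon w) zero_le
  have huniv : (Set.univ : Set (ℕ → A)) = ⋃ w : Fin n → A, cylSet n w := by
    ext x
    simp only [Set.mem_univ, Set.mem_iUnion, true_iff]
    exact ⟨fun i => x (i : ℕ), fun i => rfl⟩
  have : μ Set.univ = 0 := by
    rw [huniv]
    exact le_antisymm ((measure_iUnion_le _).trans (by simp [hz])) zero_le
  simp [measure_univ] at this

lemma minFreq_pos {A : Type*} [Fintype A] [MeasurableSpace A] [MeasurableSingletonClass A]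
    (μ : Measure (ℕ → A)) [IsProbabilityMeasure μ] (n : ℕ) : 0 < minFreq μ n := by
  obtain ⟨w₀, hw₀⟩ := exists_pos_cyl μ n
  haveI : Nonempty {w : Fin n → A // 0 < μ (cylSet n w)} := ⟨⟨w₀, hw₀⟩⟩
  haveI : Finite {w : Fin n → A // 0 < μ (cylSet n w)} := Subtype.finite
  obtain ⟨i₀, hi₀⟩ := Finite.exists_min (fun w : {w : Fin n → A // 0 < μ (cylSet n w)} => μ (cylSet n w.1))
  have hlow : μ (cylSet n i₀.1) ≤ ⨅ w : {w : Fin n → A // 0 < μ (cylSet n w)}, μ (cylSet n w.1) :=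
    le_iInf hi₀
  have hup : (⨅ w : {w : Fin n → A // 0 < μ (cylSet n w)}, μ (cylSet n w.1)) ≤ μ (cylSet n w₀) :=
    iInf_le (fun w : {w : Fin n → A // 0 < μ (cylSet n w)} => μ (cylSet n w.1)) ⟨w₀, hw₀⟩
  apply ENNReal.toReal_pos
  · exact (lt_of_lt_of_le i₀.2 hlow).ne'
  · exact (hup.trans_lt (prob_le_one.trans_lt ENNReal.one_lt_top)).ne

lemma minFreq_le_one_aux {A : Type*} [Fintype A] [MeasurableSpace A] [MeasurableSingletonClass A]
    (μ : Measure (ℕ → A)) [IsProbabilityMeasure μ] (n : ℕ) :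
    (⨅ w : {w : Fin n → A // 0 < μ (cylSet n w)}, μ (cylSet n w.1)) ≠ ⊤ := by
  obtain ⟨w₀, hw₀⟩ := exists_pos_cyl μ n
  have h1 : (⨅ w : {w : Fin n → A // 0 < μ (cylSet n w)}, μ (cylSet n w.1)) ≤ μ (cylSet n w₀) :=
    iInf_le (fun w : {w : Fin n → A // 0 < μ (cylSet n w)} => μ (cylSet n w.1)) ⟨w₀, hw₀⟩
  exact (h1.trans_lt (prob_le_one.trans_lt ENNReal.one_lt_top)).ne

lemma minFreq_compare {A B : Type*} [Fintype A] [Fintype B]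
    [MeasurableSpace A] [MeasurableSingletonClass A]
    [MeasurableSpace B] [MeasurableSingletonClass B]
    [TopologicalSpace A] [DiscreteTopology A]
    [TopologicalSpace B] [DiscreteTopology B]
    (X : Set (ℕ → A)) (Y : Set (ℕ → B)) (hYne : Y.Nonempty)
    (hXcl : IsClosed X) (hYcl : IsClosed Y)
    (hSX : ∀ x ∈ X, shiftMap x ∈ X)
    (μ : Measure (ℕ → A)) [IsProbabilityMeasure μ] (hμX : μ X = 1)
    (hμinv : ∀ s : Set (ℕ → A), MeasurableSet s → μ (shiftMap ⁻¹' s) = μ s)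
    (ν : Measure (ℕ → B)) [IsProbabilityMeasure ν]
    (hνuniq : ∀ ν' : Measure (ℕ → B), IsProbabilityMeasure ν' → ν' Y = 1 →
      (∀ s : Set (ℕ → B), MeasurableSet s → ν' (shiftMap ⁻¹' s) = ν' s) → ν' = ν)
    (φ : X ≃ₜ Y)
    (hφ : ∀ x : X, (φ ⟨shiftMap (x : ℕ → A), hSX x x.2⟩ : ℕ → B)
      = shiftMap ((φ x : ℕ → B))) :
    ∃ r : ℕ, ∀ n : ℕ, minFreq μ (n + r) ≤ minFreq ν n := by
  classical
  obtain ⟨y₀, hy₀⟩ := hYne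
  obtain ⟨r, hr⟩ := radius_exists X hXcl (fun x => (φ x : ℕ → B) 0)
    ((continuous_apply 0).comp (continuous_subtype_val.comp φ.continuous_toFun))
  refine ⟨r, fun n => ?_⟩
  have hXmeas := hXcl.measurableSet
  have hXc0 : μ Xᶜ = 0 := by
    have h := measure_compl hXmeas (measure_ne_top μ X)
    rw [hμX, measure_univ] at h
    simpa using h
  have hXfull : ∀ T : Set (ℕ → A), μ T = μ (T ∩ X) := by
    intro T
    refine le_antisymm ?_ (measure_mono Set.inter_subset_left)
    calc μ T ≤ μ ((T ∩ X) ∪ Xᶜ) := measure_mono (fun z hz => by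
          by_cases h : z ∈ X
          · exact Or.inl ⟨hz, h⟩
          · exact Or.inr h)
    _ ≤ μ (T ∩ X) + μ Xᶜ := measure_union_le _ _
    _ = μ (T ∩ X) := by rw [hXc0, add_zero]
  have hSXiter : ∀ (j : ℕ) (z : ℕ → A), z ∈ X → shiftMap^[j] z ∈ X := by
    intro j
    induction j with
    | zero => intro z hz; exact hz
    | succ j ih =>
      intro z hz
      rw [Function.iterate_succ_apply]
      exact ih _ (hSX z hz)
  have hφiter : ∀ (j : ℕ) (x : X) (h : shiftMap^[j] (x : ℕ → A) ∈ X),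
      ((φ ⟨shiftMap^[j] (x : ℕ → A), h⟩ : Y) : ℕ → B) = shiftMap^[j] ((φ x : ℕ → B)) := by
    intro j
    induction j with
    | zero =>
      intro x h
      have : (⟨shiftMap^[0] (x : ℕ → A), h⟩ : X) = x := Subtype.ext rfl
      rw [this]
      rfl
    | succ j ih =>
      intro x h
      have h' : shiftMap^[j] (shiftMap (x : ℕ → A)) ∈ X := by
        rw [← Function.iterate_succ_apply]; exact h
      have e1 : (⟨shiftMap^[j+1] (x : ℕ → A), h⟩ : X)
          = ⟨shiftMap^[j] (shiftMap (x : ℕ → A)), h'⟩ :=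
        Subtype.ext (Function.iterate_succ_apply _ _ _)
      rw [e1, ih ⟨shiftMap (x : ℕ → A), hSX _ x.2⟩ h', hφ x, Function.iterate_succ_apply]
  have hblock : ∀ (m : ℕ) (x x' : X), (∀ i, i < m + r → (x : ℕ → A) i = (x' : ℕ → A) i) →
      ∀ j, j < m → ((φ x : ℕ → B)) j = ((φ x' : ℕ → B)) j := by
    intro m x x' hag j hj
    have hxj : shiftMap^[j] (x : ℕ → A) ∈ X := hSXiter j _ x.2
    have hx'j : shiftMap^[j] (x' : ℕ → A) ∈ X := hSXiter j _ x'.2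
    have hagree : ∀ i, i < r → (shiftMap^[j] (x : ℕ → A)) i = (shiftMap^[j] (x' : ℕ → A)) i := by
      intro i hi
      rw [shift_iter_apply, shift_iter_apply]
      exact hag (i + j) (by omega)
    have hkey := hr ⟨_, hxj⟩ ⟨_, hx'j⟩ hagree
    rw [hφiter j x hxj, hφiter j x' hx'j, shift_iter_apply, shift_iter_apply] at hkey
    simpa using hkey
  set Φ : (ℕ → A) → (ℕ → B) := fun z => if h : z ∈ X then ((φ ⟨z, h⟩ : Y) : ℕ → B) else y₀
    with hΦdef
  have hΦmeas : Measurable Φ := by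
    rw [hΦdef]
    exact Measurable.dite ((continuous_subtype_val.comp φ.continuous_toFun).measurable)
      measurable_const hXmeas
  have hΦX : ∀ z (h : z ∈ X), Φ z = ((φ ⟨z, h⟩ : Y) : ℕ → B) := fun z h => dif_pos h
  have hΦY : ∀ z, Φ z ∈ Y := by
    intro z
    by_cases h : z ∈ X
    · rw [hΦX z h]; exact (φ ⟨z, h⟩).2
    · simp only [hΦdef, dif_neg h]; exact hy₀
  have hmap : Measure.map Φ μ = ν := by
    apply hνuniq
    · exact Measure.isProbabilityMeasure_map hΦmeas.aemeasurable
    · have huniv : Φ ⁻¹' Y = Set.univ := Set.eq_univ_of_forall hΦY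
      rw [Measure.map_apply hΦmeas hYcl.measurableSet, huniv, measure_univ]
    · intro s hs
      rw [Measure.map_apply hΦmeas (shift_meas hs), Measure.map_apply hΦmeas hs]
      have hcomm : ∀ z ∈ X, shiftMap (Φ z) = Φ (shiftMap z) := by
        intro z hz
        rw [hΦX z hz, hΦX _ (hSX z hz)]
        exact (hφ ⟨z, hz⟩).symm
      have hsets : Φ ⁻¹' (shiftMap ⁻¹' s) ∩ X = shiftMap ⁻¹' (Φ ⁻¹' s) ∩ X := by
        ext z
        constructor
        · rintro ⟨h1, h2⟩
          refine ⟨?_, h2⟩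
          show Φ (shiftMap z) ∈ s
          rw [← hcomm z h2]
          exact h1
        · rintro ⟨h1, h2⟩
          refine ⟨?_, h2⟩
          show shiftMap (Φ z) ∈ s
          rw [hcomm z h2]
          exact h1
      rw [hXfull (Φ ⁻¹' (shiftMap ⁻¹' s)), hsets, ← hXfull (shiftMap ⁻¹' (Φ ⁻¹' s)),
        hμinv _ (hΦmeas hs)]
  have key : ∀ w : Fin n → B, 0 < ν (cylSet n w) →
      ∃ u : Fin (n + r) → A, 0 < μ (cylSet (n + r) u) ∧ μ (cylSet (n + r) u) ≤ ν (cylSet n w) := by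
    intro w hw
    have hν' : ν (cylSet n w) = μ (Φ ⁻¹' cylSet n w) := by
      rw [← hmap, Measure.map_apply hΦmeas (cyl_meas n w)]
    set S := Φ ⁻¹' cylSet n w ∩ X with hS
    have hSpos : 0 < μ S := by
      rw [hν', hXfull (Φ ⁻¹' cylSet n w)] at hw
      exact hw
    have hcover : S ⊆ ⋃ u : Fin (n + r) → A, (cylSet (n + r) u ∩ S) := by
      intro z hz
      exact Set.mem_iUnion.mpr ⟨fun i => z (i : ℕ), ⟨fun i => rfl, hz⟩⟩
    have hex : ∃ u : Fin (n + r) → A, 0 < μ (cylSet (n + r) u ∩ S) := by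
      by_contra hcon
      push_neg at hcon
      have hz : ∀ u : Fin (n + r) → A, μ (cylSet (n + r) u ∩ S) = 0 :=
        fun u => le_antisymm (hcon u) zero_le
      have : μ S = 0 :=
        le_antisymm ((measure_mono hcover).trans ((measure_iUnion_le _).trans (by simp [hz]))) zero_le
      exact absurd this hSpos.ne'
    obtain ⟨u, hu⟩ := hex
    obtain ⟨x₀, hx₀⟩ := nonempty_of_measure_ne_zero hu.ne'
    refine ⟨u, lt_of_lt_of_le hu (measure_mono Set.inter_subset_left), ?_⟩
    have hsub : cylSet (n + r) u ∩ X ⊆ Φ ⁻¹' cylSet n w := by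
      rintro x ⟨hxu, hxX⟩
      have hag : ∀ i, i < n + r → x i = x₀ i := by
        intro i hi
        rw [hxu ⟨i, hi⟩, hx₀.1 ⟨i, hi⟩]
      have hb := hblock n ⟨x, hxX⟩ ⟨x₀, hx₀.2.2⟩ hag
      show Φ x ∈ cylSet n w
      intro i
      rw [hΦX x hxX]
      have := hb (i : ℕ) i.2
      rw [this, ← hΦX x₀ hx₀.2.2]
      exact hx₀.2.1 i
    calc μ (cylSet (n + r) u) = μ (cylSet (n + r) u ∩ X) := hXfull _
    _ ≤ μ (Φ ⁻¹' cylSet n w) := measure_mono hsub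
    _ = ν (cylSet n w) := hν'.symm
  have hiInf : (⨅ u : {u : Fin (n + r) → A // 0 < μ (cylSet (n + r) u)}, μ (cylSet (n + r) u.1))
      ≤ (⨅ w : {w : Fin n → B // 0 < ν (cylSet n w)}, ν (cylSet n w.1)) := by
    refine le_iInf fun w => ?_
    obtain ⟨u, hu1, hu2⟩ := key w.1 w.2
    exact (iInf_le (fun u : {u : Fin (n + r) → A // 0 < μ (cylSet (n + r) u)} =>
      μ (cylSet (n + r) u.1)) ⟨u, hu1⟩).trans hu2
  exact ENNReal.toReal_mono (minFreq_le_one_aux ν n) hiInf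

/-- ℬ and ℬ' are invariants of topological conjugacy among uniquely ergodic
minimal symbolic systems. -/
theorem stmt11 {A B : Type*} [Fintype A] [Fintype B]
    [MeasurableSpace A] [MeasurableSingletonClass A]
    [MeasurableSpace B] [MeasurableSingletonClass B]
    [TopologicalSpace A] [DiscreteTopology A]
    [TopologicalSpace B] [DiscreteTopology B]
    (X : Set (ℕ → A)) (Y : Set (ℕ → B)) (hXne : X.Nonempty) (hYne : Y.Nonempty)
    (hXcl : IsClosed X) (hYcl : IsClosed Y)
    (hSX : ∀ x ∈ X, shiftMap x ∈ X) (hSY : ∀ y ∈ Y, shiftMap y ∈ Y)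
    -- minimality
    (hminX : ∀ x ∈ X, closure {z : ℕ → A | ∃ n : ℕ, z = shiftMap^[n] x} = X)
    (hminY : ∀ y ∈ Y, closure {z : ℕ → B | ∃ n : ℕ, z = shiftMap^[n] y} = Y)
    -- μ and ν are the unique shift-invariant probability measures on X and Y
    (μ : Measure (ℕ → A)) [IsProbabilityMeasure μ] (hμX : μ X = 1)
    (hμinv : ∀ s : Set (ℕ → A), MeasurableSet s → μ (shiftMap ⁻¹' s) = μ s)
    (hμuniq : ∀ μ' : Measure (ℕ → A), IsProbabilityMeasure μ' → μ' X = 1 →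
      (∀ s : Set (ℕ → A), MeasurableSet s → μ' (shiftMap ⁻¹' s) = μ' s) → μ' = μ)
    (ν : Measure (ℕ → B)) [IsProbabilityMeasure ν] (hνY : ν Y = 1)
    (hνinv : ∀ s : Set (ℕ → B), MeasurableSet s → ν (shiftMap ⁻¹' s) = ν s)
    (hνuniq : ∀ ν' : Measure (ℕ → B), IsProbabilityMeasure ν' → ν' Y = 1 →
      (∀ s : Set (ℕ → B), MeasurableSet s → ν' (shiftMap ⁻¹' s) = ν' s) → ν' = ν)
    -- a topological conjugacy between (X, shift) and (Y, shift)
    (φ : X ≃ₜ Y)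
    (hφ : ∀ x : X, (φ ⟨shiftMap (x : ℕ → A), hSX x x.2⟩ : ℕ → B)
      = shiftMap ((φ x : ℕ → B))) :
    Filter.limsup (fun n : ℕ => ((1 / ((n : ℝ) * minFreq μ n) : ℝ) : EReal)) Filter.atTop
      = Filter.limsup (fun n : ℕ => ((1 / ((n : ℝ) * minFreq ν n) : ℝ) : EReal))
          Filter.atTop ∧
    Filter.liminf (fun n : ℕ => ((1 / ((n : ℝ) * minFreq μ n) : ℝ) : EReal)) Filter.atTop
      = Filter.liminf (fun n : ℕ => ((1 / ((n : ℝ) * minFreq ν n) : ℝ) : EReal))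
          Filter.atTop := by
  classical
  have hφsymm : ∀ y : Y, (φ.symm ⟨shiftMap (y : ℕ → B), hSY y y.2⟩ : ℕ → A)
      = shiftMap ((φ.symm y : ℕ → A)) := by
    intro y
    have h1 := hφ (φ.symm y)
    have h2 : ((φ (φ.symm y) : ℕ → B)) = (y : ℕ → B) := by
      rw [Homeomorph.apply_symm_apply]
    rw [h2] at h1
    have h3 : φ ⟨shiftMap ((φ.symm y : ℕ → A)), hSX _ (φ.symm y).2⟩
        = ⟨shiftMap (y : ℕ → B), hSY y y.2⟩ := Subtype.ext h1
    have h4 := congrArg φ.symm h3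
    rw [Homeomorph.symm_apply_apply] at h4
    rw [← h4]
  obtain ⟨r, hrc⟩ := minFreq_compare X Y hYne hXcl hYcl hSX μ hμX hμinv ν hνuniq φ hφ
  obtain ⟨s, hsc⟩ := minFreq_compare Y X hXne hYcl hXcl hSY ν hνY hνinv μ hμuniq φ.symm hφsymm
  have ha : ∀ n, 0 < minFreq μ n := minFreq_pos μ
  have hb : ∀ n, 0 < minFreq ν n := minFreq_pos ν
  set f : ℕ → ℝ := fun n => 1 / ((n : ℝ) * minFreq μ n) with hfdef
  set g : ℕ → ℝ := fun n => 1 / ((n : ℝ) * minFreq ν n) with hgdef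
  have hf0 : ∀ n, 0 ≤ f n := fun n =>
    one_div_nonneg.mpr (mul_nonneg (Nat.cast_nonneg n) (ha n).le)
  have hg0 : ∀ n, 0 ≤ g n := fun n =>
    one_div_nonneg.mpr (mul_nonneg (Nat.cast_nonneg n) (hb n).le)
  have hshift_ls : ∀ (h : ℕ → ℝ) (k : ℕ),
      limsup (fun n => ((h (n + k) : ℝ) : EReal)) atTop
        = limsup (fun n => ((h n : ℝ) : EReal)) atTop := by
    intro h k
    have hc := limsup_comp (fun n => ((h n : ℝ) : EReal)) (· + k) atTop
    rw [map_add_atTop_eq_nat] at hc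
    exact hc
  have hshift_li : ∀ (h : ℕ → ℝ) (k : ℕ),
      liminf (fun n => ((h (n + k) : ℝ) : EReal)) atTop
        = liminf (fun n => ((h n : ℝ) : EReal)) atTop := by
    intro h k
    have hc := liminf_comp (fun n => ((h n : ℝ) : EReal)) (· + k) atTop
    rw [map_add_atTop_eq_nat] at hc
    exact hc
  have hev1 : ∀ ε : ℝ, 0 < ε → ∀ᶠ n : ℕ in atTop, f n ≤ (1 + ε) * g (n + s) := fun ε hε =>
    event_ineq (fun n => minFreq μ n) (fun n => minFreq ν n) ha hb s hsc ε hε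
  have hev2 : ∀ ε : ℝ, 0 < ε → ∀ᶠ n : ℕ in atTop, g n ≤ (1 + ε) * f (n + r) := fun ε hε =>
    event_ineq (fun n => minFreq ν n) (fun n => minFreq μ n) hb ha r hrc ε hε
  constructor
  · apply le_antisymm
    · have step := limsup_le_aux f (fun n => g (n + s)) hf0 (fun n => hg0 _) hev1
      rwa [hshift_ls g s] at step
    · have step := limsup_le_aux g (fun n => f (n + r)) hg0 (fun n => hf0 _) hev2
      rwa [hshift_ls f r] at step
  · apply le_antisymm
    · have step := liminf_le_aux f (fun n => g (n + s)) hf0 (fun n => hg0 _) hev1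
      rwa [hshift_li g s] at step
    · have step := liminf_le_aux g (fun n => f (n + r)) hg0 (fun n => hf0 _) hev2
      rwa [hshift_li f r] at step
end

section
/- Suppose (bₖ) is eventually periodic with period pattern such that the limsup of bₖ + v_{k-1} + tₖ is attained along a periodic subsequence; then the value of limsup_{k→∞}(bₖ + v_{k-1} + tₖ) is a quadratic irrational (i.e., lies in a real quadratic field). In particular, for eventually periodic continued fractions the corresponding element of the Lagrange spectrum is quadratic over ℚ. -/
open Filter

open Matrix Topology

/-- single-step Möbius matrix -/
def mobM (d : ℕ) : Matrix (Fin 2) (Fin 2) ℤ := !![0, 1; 1, (d : ℤ)]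

/-- matrix of a word -/
def wordM (l : List ℕ) : Matrix (Fin 2) (Fin 2) ℤ := (l.map mobM).prod

@[simp] lemma wordM_nil : wordM [] = 1 := rfl

lemma wordM_cons (d : ℕ) (l : List ℕ) : wordM (d :: l) = mobM d * wordM l := by
  simp [wordM]

lemma wordM_append (l m : List ℕ) : wordM (l ++ m) = wordM l * wordM m := by
  simp [wordM]

lemma wordM_cons_apply (d : ℕ) (l : List ℕ) :
    wordM (d :: l) 0 0 = wordM l 1 0 ∧ wordM (d :: l) 0 1 = wordM l 1 1 ∧
    wordM (d :: l) 1 0 = wordM l 0 0 + d * wordM l 1 0 ∧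
    wordM (d :: l) 1 1 = wordM l 0 1 + d * wordM l 1 1 := by
  rw [wordM_cons]
  refine ⟨?_, ?_, ?_, ?_⟩ <;>
    simp [mobM, Matrix.mul_apply, Fin.sum_univ_two]

lemma wordM_props (l : List ℕ) (hl : ∀ d ∈ l, 1 ≤ d) :
    0 ≤ wordM l 0 0 ∧ 0 ≤ wordM l 0 1 ∧ 0 ≤ wordM l 1 0 ∧ 1 ≤ wordM l 1 1 ∧
      (l.length : ℤ) ≤ wordM l 1 1 ∧ (l ≠ [] → 1 ≤ wordM l 1 0 ∧ 1 ≤ wordM l 0 1) := by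
  induction l with
  | nil => simp [Matrix.one_apply]
  | cons d l ih =>
    have hd : 1 ≤ d := hl d (by simp)
    have hd' : (1 : ℤ) ≤ (d : ℤ) := by exact_mod_cast hd
    obtain ⟨h1, h2, h3, h4, h5, h6⟩ := ih (fun x hx => hl x (by simp [hx]))
    obtain ⟨e1, e2, e3, e4⟩ := wordM_cons_apply d l
    rw [e1, e2, e3, e4]
    refine ⟨h3, by linarith, ?_, ?_, ?_, fun _ => ⟨?_, by linarith⟩⟩
    · nlinarith
    · nlinarith
    · rcases eq_or_ne l [] with h | h
      · subst h
        simp only [wordM_nil, List.length_cons, List.length_nil, Matrix.one_apply]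
        norm_num
        omega
      · obtain ⟨p1, p2⟩ := h6 h
        have : (l.length : ℤ) + 1 ≤ wordM l 0 1 + d * wordM l 1 1 := by nlinarith
        simpa [Nat.cast_add] using this
    · rcases eq_or_ne l [] with h | h
      · subst h
        simp only [wordM_nil, Matrix.one_apply]
        norm_num
      · obtain ⟨p1, p2⟩ := h6 h
        nlinarith

lemma wordM_det (l : List ℕ) : (wordM l).det = (-1) ^ l.length := by
  induction l with
  | nil => simp
  | cons d l ih =>
    rw [wordM_cons, Matrix.det_mul, ih]
    have : (mobM d).det = -1 := by simp [mobM]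
    rw [this]
    simp [pow_succ]

lemma wordM_reverse (l : List ℕ) : wordM l.reverse = (wordM l)ᵀ := by
  rw [wordM, wordM, Matrix.transpose_list_prod, List.map_reverse]
  rw [List.map_map]
  congr 1
  congr 1
  apply List.map_congr_left
  intro d _
  have h : (mobM d)ᵀ = mobM d := by
    ext i j
    fin_cases i <;> fin_cases j <;> simp [mobM]
  simp [Function.comp, h]

-- PART 2
lemma cfFin_bounds (l : List ℕ) (hl : ∀ d ∈ l, 1 ≤ d) : 0 ≤ cfFin l ∧ cfFin l ≤ 1 := by
  induction l with
  | nil => simp [cfFin]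
  | cons d l ih =>
    have hd : (1 : ℝ) ≤ (d : ℕ) := by exact_mod_cast hl d (by simp)
    obtain ⟨h1, h2⟩ := ih (fun x hx => hl x (by simp [hx]))
    have hpos : (0 : ℝ) < (d : ℝ) + cfFin l := by linarith
    constructor
    · simp only [cfFin]
      positivity
    · simp only [cfFin]
      rw [div_le_one hpos]
      linarith

/-- Möbius evaluation of an integer matrix -/
noncomputable def mval (M : Matrix (Fin 2) (Fin 2) ℤ) (x : ℝ) : ℝ :=
  ((M 0 0 : ℝ) * x + (M 0 1 : ℝ)) / ((M 1 0 : ℝ) * x + (M 1 1 : ℝ))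

lemma mval_denom_pos (l : List ℕ) (hl : ∀ d ∈ l, 1 ≤ d) {x : ℝ} (hx : 0 ≤ x) :
    (1 : ℝ) ≤ (wordM l 1 0 : ℝ) * x + (wordM l 1 1 : ℝ) := by
  obtain ⟨h1, h2, h3, h4, h5, h6⟩ := wordM_props l hl
  have c3 : (0 : ℝ) ≤ (wordM l 1 0 : ℝ) := by exact_mod_cast h3
  have c4 : (1 : ℝ) ≤ (wordM l 1 1 : ℝ) := by exact_mod_cast h4
  nlinarith

lemma mval_nonneg (l : List ℕ) (hl : ∀ d ∈ l, 1 ≤ d) {x : ℝ} (hx : 0 ≤ x) :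
    0 ≤ mval (wordM l) x := by
  obtain ⟨h1, h2, h3, h4, h5, h6⟩ := wordM_props l hl
  have c1 : (0 : ℝ) ≤ (wordM l 0 0 : ℝ) := by exact_mod_cast h1
  have c2 : (0 : ℝ) ≤ (wordM l 0 1 : ℝ) := by exact_mod_cast h2
  have := mval_denom_pos l hl hx
  apply div_nonneg
  · nlinarith
  · linarith

lemma cfFin_append (l m : List ℕ) (hl : ∀ d ∈ l, 1 ≤ d) (hm : ∀ d ∈ m, 1 ≤ d) :
    cfFin (l ++ m) = mval (wordM l) (cfFin m) := by
  induction l with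
  | nil =>
    simp [mval, wordM_nil, Matrix.one_apply]
  | cons d l ih =>
    have hd : (1 : ℝ) ≤ (d : ℕ) := by exact_mod_cast hl d (by simp)
    have hl' : ∀ x ∈ l, 1 ≤ x := fun x hx => hl x (by simp [hx])
    have hx : 0 ≤ cfFin m := (cfFin_bounds m hm).1
    have hden := mval_denom_pos l hl' hx
    have hnn := mval_nonneg l hl' hx
    obtain ⟨e1, e2, e3, e4⟩ := wordM_cons_apply d l
    show cfFin (d :: (l ++ m)) = _
    simp only [cfFin]
    rw [ih hl']
    set x := cfFin m with hxdef
    set A := (wordM l 0 0 : ℝ) with hA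
    set B := (wordM l 0 1 : ℝ) with hB
    set C := (wordM l 1 0 : ℝ) with hC
    set D := (wordM l 1 1 : ℝ) with hD
    have r1 : ((wordM (d :: l) 0 0 : ℤ) : ℝ) = C := by rw [hC]; exact_mod_cast congrArg (fun z : ℤ => (z : ℝ)) e1
    have r2 : ((wordM (d :: l) 0 1 : ℤ) : ℝ) = D := by rw [hD]; exact_mod_cast congrArg (fun z : ℤ => (z : ℝ)) e2
    have r3 : ((wordM (d :: l) 1 0 : ℤ) : ℝ) = A + (d : ℝ) * C := by
      rw [hA, hC]; push_cast [e3]; ring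
    have r4 : ((wordM (d :: l) 1 1 : ℤ) : ℝ) = B + (d : ℝ) * D := by
      rw [hB, hD]; push_cast [e4]; ring
    have hABx : 0 ≤ A * x + B := by
      unfold mval at hnn
      by_contra hcon
      push_neg at hcon
      have : mval (wordM l) x < 0 := by
        unfold mval
        apply div_neg_of_neg_of_pos
        · exact hcon
        · linarith
      simp only [mval] at this
      linarith [hnn]
    have hCD : C * x + D ≠ 0 := by intro h; rw [h] at hden; linarith
    unfold mval
    rw [r1, r2, r3, r4]
    have hq : 0 ≤ (A * x + B) / (C * x + D) := div_nonneg hABx (by linarith)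
    have key : (d : ℝ) + (A * x + B) / (C * x + D)
        = ((A + (d : ℝ) * C) * x + (B + (d : ℝ) * D)) / (C * x + D) := by
      rw [eq_div_iff hCD, add_mul, div_mul_cancel₀ _ hCD]
      ring
    rw [key, one_div_div]

-- PART 3
lemma mval_sub (l : List ℕ) (hl : ∀ d ∈ l, 1 ≤ d) {x y : ℝ} (hx : 0 ≤ x) (hy : 0 ≤ y) :
    |mval (wordM l) x - mval (wordM l) y| ≤ |x - y| / ((wordM l 1 1 : ℝ))^2 := by
  obtain ⟨h1, h2, h3, h4, h5, h6⟩ := wordM_props l hl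
  set A := (wordM l 0 0 : ℝ) with hA
  set B := (wordM l 0 1 : ℝ) with hB
  set C := (wordM l 1 0 : ℝ) with hC
  set D := (wordM l 1 1 : ℝ) with hD
  have c1 : (0:ℝ) ≤ A := by rw [hA]; exact_mod_cast h1
  have c2 : (0:ℝ) ≤ B := by rw [hB]; exact_mod_cast h2
  have c3 : (0:ℝ) ≤ C := by rw [hC]; exact_mod_cast h3
  have c4 : (1:ℝ) ≤ D := by rw [hD]; exact_mod_cast h4
  have hdx : (1:ℝ) ≤ C * x + D := by nlinarith
  have hdy : (1:ℝ) ≤ C * y + D := by nlinarith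
  have hdet : |A * D - B * C| = 1 := by
    have hd2 := wordM_det l
    rw [Matrix.det_fin_two] at hd2
    have hd3 : A * D - B * C = (((-1 : ℤ) ^ l.length : ℤ) : ℝ) := by
      rw [hA, hB, hC, hD]
      exact_mod_cast hd2
    rw [hd3]
    rcases Nat.even_or_odd l.length with h | h
    · rw [h.neg_one_pow]; norm_num
    · rw [h.neg_one_pow]; norm_num
  have hformula : mval (wordM l) x - mval (wordM l) y
      = ((A * D - B * C) * (x - y)) / ((C * x + D) * (C * y + D)) := by
    unfold mval
    rw [← hA, ← hB, ← hC, ← hD, div_sub_div _ _ (by linarith) (by linarith)]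
    congr 1
    ring
  rw [hformula, abs_div, abs_mul, hdet, one_mul]
  rw [abs_of_pos (by nlinarith : (0:ℝ) < (C * x + D) * (C * y + D))]
  have hDD : D^2 ≤ (C * x + D) * (C * y + D) := by
    nlinarith [mul_nonneg c3 hx, mul_nonneg c3 hy, mul_nonneg (mul_nonneg c3 hx) (mul_nonneg c3 hy)]
  gcongr

lemma cfFin_prefix (l m₁ m₂ : List ℕ) (hl : ∀ d ∈ l, 1 ≤ d)
    (h1 : ∀ d ∈ m₁, 1 ≤ d) (h2 : ∀ d ∈ m₂, 1 ≤ d) :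
    |cfFin (l ++ m₁) - cfFin (l ++ m₂)| ≤ 1 / (max 1 (l.length : ℝ))^2 := by
  obtain ⟨p1, p2, p3, p4, p5, p6⟩ := wordM_props l hl
  have b1 := cfFin_bounds m₁ h1
  have b2 := cfFin_bounds m₂ h2
  rw [cfFin_append l m₁ hl h1, cfFin_append l m₂ hl h2]
  have key := mval_sub l hl b1.1 b2.1
  refine key.trans ?_
  have hD1 : (1:ℝ) ≤ (wordM l 1 1 : ℝ) := by exact_mod_cast p4
  have hDlen : ((l.length : ℝ)) ≤ (wordM l 1 1 : ℝ) := by exact_mod_cast p5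
  have hmax : max 1 (l.length : ℝ) ≤ (wordM l 1 1 : ℝ) := max_le hD1 hDlen
  have hmaxpos : (0:ℝ) < max 1 (l.length : ℝ) := lt_of_lt_of_le one_pos (le_max_left _ _)
  have habs : |cfFin m₁ - cfFin m₂| ≤ 1 := by
    rw [abs_le]; constructor <;> linarith [b1.1, b1.2, b2.1, b2.2]
  calc |cfFin m₁ - cfFin m₂| / ((wordM l 1 1 : ℝ))^2
      ≤ 1 / ((wordM l 1 1 : ℝ))^2 := by
        gcongr
    _ ≤ 1 / (max 1 (l.length : ℝ))^2 := by
        gcongr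

def pref (b : ℕ → ℕ) (n : ℕ) : List ℕ := List.ofFn fun i : Fin n => b i

@[simp] lemma pref_length (b : ℕ → ℕ) (n : ℕ) : (pref b n).length = n := by simp [pref]

lemma pref_mem (b : ℕ → ℕ) (hb : ∀ n, 1 ≤ b n) (n : ℕ) : ∀ d ∈ pref b n, 1 ≤ d := by
  intro d hd
  rw [pref, List.mem_ofFn] at hd
  obtain ⟨i, rfl⟩ := hd
  exact hb i

lemma pref_add (b : ℕ → ℕ) (m n : ℕ) :
    pref b (m + n) = pref b m ++ pref (fun i => b (m + i)) n := by
  rw [pref, List.ofFn_add]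
  rfl

lemma pref_congr {b c : ℕ → ℕ} {n : ℕ} (h : ∀ i < n, b i = c i) : pref b n = pref c n := by
  unfold pref
  congr 1
  funext i
  exact h i i.isLt

lemma tendsto_cfInf (b : ℕ → ℕ) (hb : ∀ n, 1 ≤ b n) :
    Tendsto (fun n => cfFin (pref b n)) atTop (𝓝 (cfInf b)) := by
  have hdist : ∀ n m K : ℕ, K ≤ n → K ≤ m →
      dist (cfFin (pref b n)) (cfFin (pref b m)) ≤ 1 / (max 1 (K : ℝ))^2 := by
    intro n m K hn hm
    have en : pref b n = pref b K ++ pref (fun i => b (K + i)) (n - K) := by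
      rw [← pref_add]; congr 1; omega
    have em : pref b m = pref b K ++ pref (fun i => b (K + i)) (m - K) := by
      rw [← pref_add]; congr 1; omega
    rw [Real.dist_eq, en, em]
    have := cfFin_prefix (pref b K) (pref (fun i => b (K + i)) (n - K))
      (pref (fun i => b (K + i)) (m - K)) (pref_mem b hb K)
      (pref_mem (fun i => b (K + i)) (fun i => hb _) (n - K))
      (pref_mem (fun i => b (K + i)) (fun i => hb _) (m - K))
    simpa using this
  have hu : Tendsto (fun K : ℕ => 1 / (max 1 (K : ℝ))^2) atTop (𝓝 0) := by
    apply squeeze_zero' (Filter.Eventually.of_forall (fun K => by positivity))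
      (Filter.eventually_atTop.mpr ⟨1, fun K hK => ?_⟩) tendsto_one_div_atTop_nhds_zero_nat
    have h1 : (1:ℝ) ≤ (K:ℝ) := by exact_mod_cast hK
    rw [max_eq_right h1]
    rw [div_le_div_iff₀ (by positivity) (by positivity)]
    nlinarith
  have hcauchy : CauchySeq (fun n => cfFin (pref b n)) :=
    cauchySeq_of_le_tendsto_0 _ hdist hu
  obtain ⟨L, hL⟩ := cauchySeq_tendsto_of_complete hcauchy
  have : cfInf b = L := hL.limUnder_eq
  rw [this]
  exact hL

lemma cfInf_bounds (b : ℕ → ℕ) (hb : ∀ n, 1 ≤ b n) : 0 ≤ cfInf b ∧ cfInf b ≤ 1 := by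
  have h := tendsto_cfInf b hb
  constructor
  · exact ge_of_tendsto' h (fun n => (cfFin_bounds _ (pref_mem b hb n)).1)
  · exact le_of_tendsto' h (fun n => (cfFin_bounds _ (pref_mem b hb n)).2)

-- PART 4
lemma cfInf_fixed (b : ℕ → ℕ) (hb : ∀ n, 1 ≤ b n) (p : ℕ) (hp : 0 < p)
    (hper : ∀ n, b (n + p) = b n) :
    (wordM (pref b p) 1 0 : ℝ) * (cfInf b)^2 +
      ((wordM (pref b p) 1 1 : ℝ) - (wordM (pref b p) 0 0 : ℝ)) * cfInf b
      - (wordM (pref b p) 0 1 : ℝ) = 0 := by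
  set L := cfInf b with hL
  have hL0 : 0 ≤ L := (cfInf_bounds b hb).1
  have hsplit : ∀ k, pref b (p + k) = pref b p ++ pref b k := by
    intro k
    rw [pref_add]
    congr 1
    apply pref_congr
    intro i _
    rw [Nat.add_comm p i]
    exact hper i
  have hx : ∀ k, cfFin (pref b (p + k)) = mval (wordM (pref b p)) (cfFin (pref b k)) := by
    intro k
    rw [hsplit k, cfFin_append _ _ (pref_mem b hb p) (pref_mem b hb k)]
  have h1 : Tendsto (fun k => cfFin (pref b (p + k))) atTop (𝓝 L) := by
    have := (tendsto_cfInf b hb).comp (tendsto_add_atTop_nat p)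
    simpa [Function.comp_def, Nat.add_comm] using this
  obtain ⟨q1, q2, q3, q4, q5, q6⟩ := wordM_props (pref b p) (pref_mem b hb p)
  have c1 : (0:ℝ) ≤ (wordM (pref b p) 0 0 : ℝ) := by exact_mod_cast q1
  have c3 : (0:ℝ) ≤ (wordM (pref b p) 1 0 : ℝ) := by exact_mod_cast q3
  have c4 : (1:ℝ) ≤ (wordM (pref b p) 1 1 : ℝ) := by exact_mod_cast q4
  have hden : (wordM (pref b p) 1 0 : ℝ) * L + (wordM (pref b p) 1 1 : ℝ) ≠ 0 := by
    have : (0:ℝ) ≤ (wordM (pref b p) 1 0 : ℝ) * L := mul_nonneg c3 hL0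
    intro h; nlinarith
  have h2 : Tendsto (fun k => mval (wordM (pref b p)) (cfFin (pref b k))) atTop
      (𝓝 (mval (wordM (pref b p)) L)) := by
    unfold mval
    apply Tendsto.div
    · exact ((tendsto_cfInf b hb).const_mul _).add_const _
    · exact ((tendsto_cfInf b hb).const_mul _).add_const _
    · exact hden
  have heq : L = mval (wordM (pref b p)) L := by
    apply tendsto_nhds_unique h1
    simp only [hx]
    exact h2
  unfold mval at heq
  have := heq
  field_simp at this
  nlinarith [this]

lemma quad_sq {A B C L : ℝ} (h : A * L^2 + B * L + C = 0) :
    (2 * A * L + B)^2 = B^2 - 4 * A * C := by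
  linear_combination 4 * A * h

lemma limsup_of_classes (f : ℕ → ℝ) (N p : ℕ) (hp : 0 < p) (L : ℕ → ℝ)
    (hconv : ∀ r < p, Tendsto (fun n => f (N + r + n * p)) atTop (𝓝 (L r)))
    (hlo : ∀ k, 0 ≤ f k) (hhi : ∃ Cb : ℝ, ∀ k, f k ≤ Cb) :
    ∃ r < p, Filter.limsup f Filter.atTop = L r := by
  obtain ⟨Cb, hCb⟩ := hhi
  have hbdd : IsBoundedUnder (· ≤ ·) atTop f := ⟨Cb, Filter.eventually_map.mpr
    (Filter.Eventually.of_forall hCb)⟩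
  have hbdd' : IsBoundedUnder (· ≥ ·) atTop f := ⟨0, Filter.eventually_map.mpr
    (Filter.Eventually.of_forall hlo)⟩
  have hcob : IsCoboundedUnder (· ≤ ·) atTop f := hbdd'.isCoboundedUnder_le
  -- maximum of L over range p
  obtain ⟨r₀, hr₀mem, hr₀max⟩ := Finset.exists_max_image (Finset.range p) L
    ⟨0, Finset.mem_range.mpr hp⟩
  rw [Finset.mem_range] at hr₀mem
  refine ⟨r₀, hr₀mem, le_antisymm ?_ ?_⟩
  · -- limsup ≤ L r₀
    apply le_of_forall_pos_le_add
    intro ε hε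
    apply Filter.limsup_le_of_le hcob
    -- eventual bound
    have hev : ∀ r < p, ∃ n₀ : ℕ, ∀ n ≥ n₀, f (N + r + n * p) ≤ L r + ε := by
      intro r hr
      have := (hconv r hr).eventually (eventually_le_nhds (lt_add_of_pos_right (L r) hε))
      rw [Filter.eventually_atTop] at this
      exact this
    choose n₀ hn₀ using hev
    classical
    set n₁ : ℕ := (Finset.range p).sup (fun r => if h : r < p then n₀ r h else 0) with hn₁
    rw [Filter.eventually_atTop]
    refine ⟨N + p * (n₁ + 1), fun k hk => ?_⟩
    set r := (k - N) % p with hr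
    set n := (k - N) / p with hn
    have hrlt : r < p := Nat.mod_lt _ hp
    have hNk : N ≤ k := le_trans (Nat.le_add_right N _) hk
    have hmod' : p * n + r = k - N := by rw [hn, hr]; exact Nat.div_add_mod _ _
    have hkeq : k = N + r + n * p := by rw [Nat.mul_comm n p]; omega
    have hnn : p * (n₁ + 1) ≤ p * n + r := by omega
    have hlt : p * n₁ < p * n := by nlinarith
    have hn1n : n₁ < n := Nat.lt_of_mul_lt_mul_left hlt
    have hge : n₀ r hrlt ≤ n := by
      have : n₀ r hrlt ≤ n₁ := by
        have := Finset.le_sup (f := fun r => if h : r < p then n₀ r h else 0)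
          (Finset.mem_range.mpr hrlt)
        simpa [hrlt] using this
      omega
    have := hn₀ r hrlt n hge
    rw [hkeq]
    calc f (N + r + n * p) ≤ L r + ε := this
      _ ≤ L r₀ + ε := by
          have := hr₀max r (Finset.mem_range.mpr hrlt)
          linarith
  · -- L r₀ ≤ limsup
    have key : ∀ ε > (0:ℝ), L r₀ - ε ≤ Filter.limsup f Filter.atTop := by
      intro ε hε
      apply Filter.le_limsup_of_frequently_le ?_ hbdd
      have hmap : Tendsto (fun n : ℕ => N + r₀ + n * p) atTop atTop := by
        apply Filter.tendsto_atTop_mono (fun n => ?_) (Filter.tendsto_atTop_atTop_of_monotone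
          (fun x y hxy => by nlinarith) (fun c => ⟨c, by nlinarith⟩))
        · nlinarith
      have hev : ∀ᶠ n in atTop, L r₀ - ε ≤ f (N + r₀ + n * p) := by
        have := (hconv r₀ hr₀mem).eventually (eventually_ge_nhds (by linarith : L r₀ - ε < L r₀))
        exact this
      exact hmap.frequently hev.frequently
    by_contra hcon
    push_neg at hcon
    obtain ⟨ε, hε, h⟩ : ∃ ε > (0:ℝ), Filter.limsup f Filter.atTop < L r₀ - ε := by
      refine ⟨(L r₀ - Filter.limsup f Filter.atTop) / 2, by linarith, by linarith⟩
    exact absurd (key ε hε) (by linarith)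

-- PART 6 helpers
section helpers
variable (a : ℕ → ℕ) (N p : ℕ)

lemma a_shift (hper : ∀ k, N ≤ k → a (k + p) = a k) :
    ∀ s k, N ≤ k → a (k + s * p) = a k := by
  intro s
  induction s with
  | zero => intro k _; simp
  | succ s ih =>
    intro k hk
    have : k + (s + 1) * p = (k + s * p) + p := by ring
    rw [this, hper _ (le_trans hk (Nat.le_add_right _ _)), ih k hk]

lemma a_eq_mod (hp : 0 < p) (hper : ∀ k, N ≤ k → a (k + p) = a k)
    (m m' : ℕ) (hm : N ≤ m) (hm' : N ≤ m') (h : m % p = m' % p) : a m = a m' := by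
  rcases le_total m m' with hle | hle
  · have hmod : m ≡ m' [MOD p] := h
    obtain ⟨s, hs⟩ := (Nat.modEq_iff_dvd' hle).mp hmod
    have : m' = m + s * p := by rw [Nat.mul_comm]; omega
    rw [this, a_shift a N p hper s m hm]
  · have hmod : m' ≡ m [MOD p] := h.symm
    obtain ⟨s, hs⟩ := (Nat.modEq_iff_dvd' hle).mp hmod
    have : m = m' + s * p := by rw [Nat.mul_comm]; omega
    rw [this, a_shift a N p hper s m' hm']

lemma a_bounded (hp : 0 < p) (hper : ∀ k, N ≤ k → a (k + p) = a k) :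
    ∀ k, a k ≤ (Finset.range (N + p)).sup a := by
  intro k
  induction k using Nat.strong_induction_on with
  | _ k ih =>
    rcases lt_or_ge k (N + p) with h | h
    · exact Finset.le_sup (Finset.mem_range.mpr h)
    · have hk : k = (k - p) + p := by omega
      have : a k = a (k - p) := by
        conv_lhs => rw [hk]
        exact hper (k - p) (by omega)
      rw [this]
      exact ih (k - p) (by omega)

lemma cfV_ofFn (k : ℕ) : (List.range k).reverse.map a = pref (fun j => a (k - 1 - j)) k := by
  apply List.ext_getElem
  · simp [pref]
  · intro j h1 h2
    simp only [pref, List.getElem_ofFn]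
    rw [List.getElem_map, List.getElem_reverse, List.getElem_range]
    congr 1
    simp

lemma cfFin_agree (f g : ℕ → ℕ) (hf : ∀ i, 1 ≤ f i) (hg : ∀ i, 1 ≤ g i) (k m : ℕ)
    (hm : m ≤ k) (h : ∀ j < m, f j = g j) :
    |cfFin (pref f k) - cfFin (pref g k)| ≤ 1 / (max 1 (m : ℝ))^2 := by
  have hf' : pref f k = pref f m ++ pref (fun i => f (m + i)) (k - m) := by
    rw [← pref_add]; congr 1; omega
  have hg' : pref g k = pref g m ++ pref (fun i => g (m + i)) (k - m) := by
    rw [← pref_add]; congr 1; omega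
  have hfg : pref f m = pref g m := pref_congr h
  rw [hf', hg', hfg]
  have := cfFin_prefix (pref g m) (pref (fun i => f (m + i)) (k - m))
    (pref (fun i => g (m + i)) (k - m)) (pref_mem g hg m)
    (pref_mem _ (fun i => hf _) _) (pref_mem _ (fun i => hg _) _)
  simpa [pref_length] using this

lemma tendsto_class' (N' p : ℕ) (K : ℕ) (hp : 0 < p) :
    Tendsto (fun n : ℕ => K + n * p) atTop atTop := by
  have h : ∀ n : ℕ, n ≤ K + n * p :=
    fun n => le_trans (Nat.le_mul_of_pos_right n hp) (Nat.le_add_left _ _)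
  exact Filter.tendsto_atTop_mono (fun n => h n) tendsto_id

lemma u_tendsto : Tendsto (fun m : ℕ => 1 / (max 1 (m : ℝ))^2) atTop (𝓝 0) := by
  apply squeeze_zero' (Filter.Eventually.of_forall (fun K => by positivity))
    (Filter.eventually_atTop.mpr ⟨1, fun K hK => ?_⟩) tendsto_one_div_atTop_nhds_zero_nat
  have h1 : (1:ℝ) ≤ (K:ℝ) := by exact_mod_cast hK
  rw [max_eq_right h1]
  rw [div_le_div_iff₀ (by positivity) (by positivity)]
  nlinarith

end helpers

lemma final_algebra (aK : ℕ) (w t : ℝ) (AwZ BwZ CwZ AtZ BtZ CtZ : ℤ)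
    (hAw : 1 ≤ AwZ) (hAt : 1 ≤ AtZ)
    (hqw : (AwZ : ℝ) * w^2 + (BwZ : ℝ) * w - (CwZ : ℝ) = 0)
    (hqt : (AtZ : ℝ) * t^2 + (BtZ : ℝ) * t - (CtZ : ℝ) = 0)
    (hdisc : BwZ^2 + 4 * CwZ * AwZ = BtZ^2 + 4 * CtZ * AtZ) :
    ∃ A B C : ℚ, (A ≠ 0 ∨ B ≠ 0) ∧
      (A : ℝ) * ((aK : ℝ) + w + t)^2 + (B : ℝ) * ((aK : ℝ) + w + t) + (C : ℝ) = 0 := by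
  have hA1 : (1:ℝ) ≤ (AwZ:ℝ) := by exact_mod_cast hAw
  have hA2 : (1:ℝ) ≤ (AtZ:ℝ) := by exact_mod_cast hAt
  have hAne : (AwZ:ℝ) ≠ 0 := by linarith
  have hAtne : (AtZ:ℝ) ≠ 0 := by linarith
  set sw : ℝ := 2*(AwZ:ℝ)*w + (BwZ:ℝ) with hsw
  set st : ℝ := 2*(AtZ:ℝ)*t + (BtZ:ℝ) with hst
  have hsw2 : sw^2 = (BwZ:ℝ)^2 + 4*(CwZ:ℝ)*(AwZ:ℝ) := by
    rw [hsw]; linear_combination 4*(AwZ:ℝ)*hqw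
  have hst2 : st^2 = (BtZ:ℝ)^2 + 4*(CtZ:ℝ)*(AtZ:ℝ) := by
    rw [hst]; linear_combination 4*(AtZ:ℝ)*hqt
  have hdiscR : (BwZ:ℝ)^2 + 4*(CwZ:ℝ)*(AwZ:ℝ) = (BtZ:ℝ)^2 + 4*(CtZ:ℝ)*(AtZ:ℝ) := by
    exact_mod_cast hdisc
  have hsq : (st - sw) * (st + sw) = 0 := by
    have h : st^2 = sw^2 := by rw [hst2, hsw2, hdiscR]
    linear_combination h
  have hwv : w = (sw - (BwZ:ℝ)) / (2*(AwZ:ℝ)) := by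
    rw [hsw]; field_simp; ring
  have hqAwne : ((AwZ:ℚ)) ≠ 0 := by
    have : (1:ℚ) ≤ (AwZ:ℚ) := by exact_mod_cast hAw
    linarith
  have hqAtne : ((AtZ:ℚ)) ≠ 0 := by
    have : (1:ℚ) ≤ (AtZ:ℚ) := by exact_mod_cast hAt
    linarith
  set qD : ℚ := (BwZ:ℚ)^2 + 4*(CwZ:ℚ)*(AwZ:ℚ) with hqD
  have hDcast : ((qD : ℚ) : ℝ) = sw^2 := by
    rw [hqD, hsw2]; push_cast; ring
  set q0 : ℚ := (aK : ℚ) - (BwZ:ℚ)/(2*(AwZ:ℚ)) - (BtZ:ℚ)/(2*(AtZ:ℚ)) with hq0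
  rcases mul_eq_zero.mp hsq with hcase | hcase
  · -- st = sw
    have hc : st = sw := by linarith
    have htv : t = (sw - (BtZ:ℝ)) / (2*(AtZ:ℝ)) := by
      rw [← hc, hst]; field_simp; ring
    set q1 : ℚ := 1/(2*(AwZ:ℚ)) + 1/(2*(AtZ:ℚ)) with hq1
    refine ⟨1, -2*q0, q0^2 - q1^2*qD, Or.inl one_ne_zero, ?_⟩
    have hL1 : ((aK : ℝ) + w + t) - ((q0 : ℚ) : ℝ) = ((q1 : ℚ) : ℝ) * sw := by
      rw [hwv, htv, hq0, hq1]
      push_cast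
      field_simp
      ring
    push_cast
    linear_combination (((aK : ℝ) + w + t) - ((q0 : ℚ) : ℝ) + ((q1 : ℚ) : ℝ) * sw) * hL1
      - ((q1 : ℚ) : ℝ)^2 * hDcast
  · -- st = -sw
    have hc : st = -sw := by linarith
    have htv : t = (-sw - (BtZ:ℝ)) / (2*(AtZ:ℝ)) := by
      rw [← hc, hst]; field_simp; ring
    set q1 : ℚ := 1/(2*(AwZ:ℚ)) - 1/(2*(AtZ:ℚ)) with hq1
    refine ⟨1, -2*q0, q0^2 - q1^2*qD, Or.inl one_ne_zero, ?_⟩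
    have hL1 : ((aK : ℝ) + w + t) - ((q0 : ℚ) : ℝ) = ((q1 : ℚ) : ℝ) * sw := by
      rw [hwv, htv, hq0, hq1]
      push_cast
      field_simp
      ring
    push_cast
    linear_combination (((aK : ℝ) + w + t) - ((q0 : ℚ) : ℝ) + ((q1 : ℚ) : ℝ) * sw) * hL1
      - ((q1 : ℚ) : ℝ)^2 * hDcast

/-- for eventually periodic partial quotients, the Lagrange value
limsup (bₖ + v_{k-1} + tₖ) is quadratic over ℚ. -/
theorem stmt19 (a : ℕ → ℕ) (ha : ∀ n, 1 ≤ a n) (N p : ℕ) (hp : 0 < p)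
    (hper : ∀ k, N ≤ k → a (k + p) = a k) :
    ∃ A B C : ℚ, (A ≠ 0 ∨ B ≠ 0) ∧
      (A : ℝ) * (Filter.limsup (fun k => (a k : ℝ) + cfV a k + cfT a (k + 1))
          Filter.atTop) ^ 2 +
        (B : ℝ) * Filter.limsup (fun k => (a k : ℝ) + cfV a k + cfT a (k + 1))
          Filter.atTop + (C : ℝ) = 0 := by
  set f : ℕ → ℝ := fun k => (a k : ℝ) + cfV a k + cfT a (k + 1) with hf
  -- the reversed-periodic sequences
  set cs : ℕ → ℕ → ℕ := fun K j => a (K + p - 1 - j % p) with hcs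
  set L : ℕ → ℝ := fun r => (a (N + r) : ℝ) + cfInf (cs (N + r)) + cfT a (N + r + 1) with hLdef
  -- basic bounds on cfV and cfT
  have hVb : ∀ k, 0 ≤ cfV a k ∧ cfV a k ≤ 1 := by
    intro k
    have : ∀ d ∈ (List.range k).reverse.map a, 1 ≤ d := by
      rw [cfV_ofFn a k]
      exact pref_mem _ (fun i => ha _) k
    exact cfFin_bounds _ this
  have hTb : ∀ k, 0 ≤ cfT a k ∧ cfT a k ≤ 1 := by
    intro k
    exact cfInf_bounds _ (fun n => ha _)
  -- convergence along classes
  have hconv : ∀ r < p, Tendsto (fun n => f (N + r + n * p)) atTop (𝓝 (L r)) := by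
    intro r hr
    set K := N + r with hK
    have hKN : N ≤ K := Nat.le_add_right _ _
    set c : ℕ → ℕ := cs K with hc
    have hc1 : ∀ j, 1 ≤ c j := fun j => ha _
    -- a is constant along the class
    have b1 : ∀ n, a (K + n * p) = a K := fun n => a_shift a N p hper n K hKN
    -- cfT is constant along the class
    have b2 : ∀ n : ℕ, cfT a (K + n * p + 1) = cfT a (K + 1) := by
      intro n
      unfold cfT
      congr 1
      funext j
      have e1 : j + (K + n * p + 1) = (j + K + 1) + n * p := by ring
      have e2 : j + (K + 1) = j + K + 1 := by ring
      rw [e1, e2, a_shift a N p hper n (j + K + 1) (by omega)]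
    -- cfV converges along the class
    have hV : Tendsto (fun n => cfV a (K + n * p)) atTop (𝓝 (cfInf c)) := by
      have e2 : ∀ n : ℕ, ∀ j < (K + n * p) - N, a (K + n * p - 1 - j) = c j := by
        intro n j hj
        set k := K + n * p with hk
        have hq : p * (j / p) + j % p = j := Nat.div_add_mod j p
        have hs : j % p < p := Nat.mod_lt _ hp
        have key : (k - 1 - j) + (j / p + 1) * p = (K + p - 1 - j % p) + n * p := by
          have h1 : (j / p + 1) * p = p * (j / p) + p := by ring
          rw [h1]
          omega
        have hmod : (k - 1 - j) % p = (K + p - 1 - j % p) % p := by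
          have e := Nat.add_mul_mod_self_right (k - 1 - j) (j / p + 1) p
          have e2 := Nat.add_mul_mod_self_right (K + p - 1 - j % p) n p
          rw [← e, key, e2]
        exact a_eq_mod a N p hp hper _ _ (by omega) (by omega) hmod
      have e3 : ∀ n : ℕ, dist (cfV a (K + n * p)) (cfFin (pref c (K + n * p)))
          ≤ 1 / (max 1 (((K + n * p) - N : ℕ) : ℝ))^2 := by
        intro n
        rw [Real.dist_eq]
        unfold cfV
        rw [cfV_ofFn a (K + n * p)]
        exact cfFin_agree _ _ (fun i => ha _) hc1 _ _ (by omega) (e2 n)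
      have e4 : Tendsto (fun n : ℕ => 1 / (max 1 (((K + n * p) - N : ℕ) : ℝ))^2)
          atTop (𝓝 0) := by
        apply u_tendsto.comp
        apply Filter.tendsto_atTop_mono (fun n => ?_) tendsto_id
        show id n ≤ K + n * p - N
        have : n ≤ n * p := Nat.le_mul_of_pos_right n hp
        simp only [id]
        omega
      have e5 : Tendsto (fun n => cfFin (pref c (K + n * p))) atTop (𝓝 (cfInf c)) :=
        (tendsto_cfInf c hc1).comp (tendsto_class' N p K hp)
      apply tendsto_of_tendsto_of_dist e5
      apply squeeze_zero (fun n => dist_nonneg) (fun n => ?_) e4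
      rw [dist_comm]
      exact e3 n
    have hfun : (fun n => f (K + n * p))
        = fun n => (a K : ℝ) + cfV a (K + n * p) + cfT a (K + 1) := by
      funext n
      rw [hf]
      simp only
      rw [b1 n, b2 n]
    have hLr : L r = (a K : ℝ) + cfInf c + cfT a (K + 1) := rfl
    rw [hfun, hLr]
    exact (hV.const_add ((a K : ℝ))).add_const (cfT a (K + 1))
  -- boundedness
  have hlo : ∀ k, 0 ≤ f k := by
    intro k
    have h1 := hVb k
    have h2 := hTb (k + 1)
    have : (0:ℝ) ≤ (a k : ℝ) := Nat.cast_nonneg _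
    rw [hf]; simp only; linarith
  have hhi : ∃ Cb : ℝ, ∀ k, f k ≤ Cb := by
    refine ⟨(((Finset.range (N + p)).sup a : ℕ) : ℝ) + 2, fun k => ?_⟩
    have h1 := hVb k
    have h2 := hTb (k + 1)
    have h3 : (a k : ℝ) ≤ (((Finset.range (N + p)).sup a : ℕ) : ℝ) := by
      exact_mod_cast a_bounded a N p hp hper k
    rw [hf]; simp only; linarith
  obtain ⟨r, hr, hlim⟩ := limsup_of_classes f N p hp L hconv hlo hhi
  rw [hf] at hlim
  set K := N + r with hK
  have hKN : N ≤ K := Nat.le_add_right _ _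
  set c : ℕ → ℕ := cs K with hc
  have hc1 : ∀ j, 1 ≤ c j := fun j => ha _
  set bK : ℕ → ℕ := fun n => a (n + (K + 1)) with hbK
  have hbK1 : ∀ n, 1 ≤ bK n := fun n => ha _
  -- periodicity of c and bK
  have hcper : ∀ n, c (n + p) = c n := by
    intro n
    show cs K (n + p) = cs K n
    rw [hcs]
    simp only
    rw [Nat.add_mod_right]
  have hbKper : ∀ n, bK (n + p) = bK n := by
    intro n
    show a (n + p + (K + 1)) = a (n + (K + 1))
    have e : n + p + (K + 1) = (n + (K + 1)) + p := by ring
    rw [e, hper _ (by omega)]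
  set w : ℝ := cfInf c with hw
  set t : ℝ := cfT a (K + 1) with ht
  have htt : t = cfInf bK := rfl
  set Mw := wordM (pref c p) with hMw
  set Mt := wordM (pref bK p) with hMt
  have hqw := cfInf_fixed c hc1 p hp hcper
  have hqt := cfInf_fixed bK hbK1 p hp hbKper
  rw [← hMw, ← hw] at hqw
  rw [← hMt] at hqt
  -- positivity of leading coefficients
  have hprefc_ne : pref c p ≠ [] := by
    intro h
    have := pref_length c p
    rw [h] at this
    simp at this
    omega
  have hprefb_ne : pref bK p ≠ [] := by
    intro h
    have := pref_length bK p
    rw [h] at this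
    simp at this
    omega
  have hAwZ : 1 ≤ Mw 1 0 := ((wordM_props (pref c p) (pref_mem c hc1 p)).2.2.2.2.2 hprefc_ne).1
  have hAtZ : 1 ≤ Mt 1 0 := ((wordM_props (pref bK p) (pref_mem bK hbK1 p)).2.2.2.2.2 hprefb_ne).1
  -- word comparisons
  set u : List ℕ := pref (fun i => a (K + i)) p with hu
  set v : List ℕ := pref (fun i => a (K + 1 + i)) (p - 1) with hv
  have g1 : pref c p = u.reverse := by
    apply List.ext_getElem
    · rw [pref_length, List.length_reverse, hu, pref_length]
    · intro j h1 h2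
      have hjp : j < p := by
        have := pref_length c p
        omega
      rw [List.getElem_reverse]
      simp only [hu, pref, List.getElem_ofFn, List.length_ofFn]
      show c j = a (K + (p - 1 - j))
      rw [hc, hcs]
      simp only
      rw [Nat.mod_eq_of_lt hjp]
      congr 1
      omega
  have g2 : Mw = (wordM u)ᵀ := by rw [hMw, g1, wordM_reverse]
  have g3 : u = [a K] ++ v := by
    have h1 : u = pref (fun i => a (K + i)) (1 + (p - 1)) := by rw [hu]; congr 1; omega
    have e1 : pref (fun i => a (K + i)) 1 = [a K] := by
      rw [pref]; simp
    rw [h1, pref_add, e1, hv]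
    congr 1
    apply pref_congr
    intro i _
    show a (K + (1 + i)) = a (K + 1 + i)
    congr 1
    omega
  have g4 : pref bK p = v ++ [a K] := by
    have h1 : pref bK p = pref bK ((p - 1) + 1) := by congr 1; omega
    have e1 : pref (fun i => bK ((p - 1) + i)) 1 = [a K] := by
      rw [pref, List.ofFn_succ, List.ofFn_zero]
      congr 1
      show a ((p - 1) + ((0 : Fin 1) : ℕ) + (K + 1)) = a K
      have h0 : ((0 : Fin 1) : ℕ) = 0 := rfl
      have e : (p - 1) + ((0 : Fin 1) : ℕ) + (K + 1) = K + p := by rw [h0]; omega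
      rw [e, hper K hKN]
    rw [h1, pref_add, e1, hv]
    congr 1
    apply pref_congr
    intro i _
    show a (i + (K + 1)) = a (K + 1 + i)
    congr 1
    omega
  have gtr : Matrix.trace Mw = Matrix.trace Mt := by
    rw [g2, Matrix.trace_transpose, g3, hMt, g4, wordM_append, wordM_append,
      Matrix.trace_mul_comm]
  have gdet : Mw.det = Mt.det := by
    rw [g2, Matrix.det_transpose, g3, hMt, g4, wordM_append, wordM_append,
      Matrix.det_mul, Matrix.det_mul, mul_comm]
  -- discriminants agree
  have hdiscZ : (Mw 1 1 - Mw 0 0)^2 + 4 * Mw 0 1 * Mw 1 0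
      = (Mt 1 1 - Mt 0 0)^2 + 4 * Mt 0 1 * Mt 1 0 := by
    have e : ∀ M : Matrix (Fin 2) (Fin 2) ℤ,
        (M 1 1 - M 0 0)^2 + 4 * M 0 1 * M 1 0 = (Matrix.trace M)^2 - 4 * M.det := by
      intro M
      rw [Matrix.trace_fin_two, Matrix.det_fin_two]
      ring
    rw [e, e, gtr, gdet]
  -- final algebra
  have hqw' : (Mw 1 0 : ℝ) * w^2 + ((Mw 1 1 - Mw 0 0 : ℤ) : ℝ) * w - (Mw 0 1 : ℝ) = 0 := by
    push_cast
    linarith [hqw]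
  have hqt' : (Mt 1 0 : ℝ) * t^2 + ((Mt 1 1 - Mt 0 0 : ℤ) : ℝ) * t - (Mt 0 1 : ℝ) = 0 := by
    push_cast
    rw [htt]
    linarith [hqt]
  have hdisc' : (Mw 1 1 - Mw 0 0)^2 + 4 * Mw 0 1 * Mw 1 0
      = (Mt 1 1 - Mt 0 0)^2 + 4 * Mt 0 1 * Mt 1 0 := hdiscZ
  obtain ⟨A, B, C, hAB, heq⟩ := final_algebra (a K) w t (Mw 1 0) (Mw 1 1 - Mw 0 0) (Mw 0 1)
    (Mt 1 0) (Mt 1 1 - Mt 0 0) (Mt 0 1) hAwZ hAtZ hqw' hqt' (by linarith [hdisc'])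
  refine ⟨A, B, C, hAB, ?_⟩
  have hLr : L r = (a K : ℝ) + w + t := rfl
  rw [hlim, hLr]
  exact heq
end
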